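/- arXiv:0712.0492 — 3 statements merged into one kernel-verified Lean document; each statement's English description precedes it below -/
import Mathlib

section
/- Let f be a bounded analytic function on the right half-plane Re s > 0 whose nontangential boundary values f(it) exist for almost every t. Then for every positive integer n, a_n = lim_{T→∞} (1/T) ∫_0^T f(it) n^{it} dt, where a_n is the n-th coefficient of the Dirichlet series representation of f, assuming f is represented by a convergent Dirichlet series ∑ a_n n^{-s} in some half-plane Re s > σ_0. -/
open MeasureTheory Filter Complex Real

lemma exp_sub_aux (n m : ℕ) (s : ℂ) :
    ((m + 1 : ℕ) : ℂ) ^ (-s) * Complex.exp (s * (Real.log n : ℂ)) =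
      Complex.exp (s * ((Real.log n - Real.log (m + 1) : ℝ) : ℂ)) := by
  have hm : ((m + 1 : ℕ) : ℂ) ≠ 0 := Nat.cast_ne_zero.mpr (Nat.succ_ne_zero m)
  rw [Complex.cpow_def_of_ne_zero hm]
  have hlog : Complex.log ((m + 1 : ℕ) : ℂ) = ((Real.log ((m+1:ℕ):ℝ) : ℝ) : ℂ) := by
    rw [← Complex.ofReal_natCast, Complex.ofReal_log (Nat.cast_nonneg _)]
  rw [hlog, ← Complex.exp_add]
  congr 1
  push_cast
  ring

lemma re_aux (σ t c : ℝ) : (((σ:ℂ) + t*I) * (c : ℂ)).re = σ * c := by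
  simp [Complex.add_re, Complex.mul_re]

lemma norm_F_aux (z : ℂ) (σ t c : ℝ) :
    ‖z * Complex.exp (((σ:ℂ) + t*I) * (c : ℂ))‖ = ‖z‖ * Real.exp (σ * c) := by
  rw [norm_mul, Complex.norm_exp, re_aux]

lemma lemA (a : ℕ → ℂ) (n : ℕ) (hn : 1 ≤ n) (σ : ℝ) (G : ℝ → ℂ)
    (hsum : ∀ t : ℝ, HasSum (fun m : ℕ =>
      a (m+1) * Complex.exp (((σ:ℂ) + t*I) * ((Real.log n - Real.log (m+1) : ℝ) : ℂ))) (G t))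
    (hS : Summable (fun m : ℕ => ‖a (m+1)‖ * Real.exp (σ * (Real.log n - Real.log (m+1))))) :
    Tendsto (fun T : ℝ => (1/(T:ℂ)) * ∫ t in (0:ℝ)..T, G t) atTop (nhds (a n)) := by
  set c : ℕ → ℝ := fun m => Real.log n - Real.log (m+1) with hc
  set F : ℕ → ℝ → ℂ := fun m t => a (m+1) * Complex.exp (((σ:ℂ) + t*I) * (c m : ℂ)) with hF
  set bound : ℕ → ℝ := fun m => ‖a (m+1)‖ * Real.exp (σ * c m) with hbd
  have hFnorm : ∀ m t, ‖F m t‖ = bound m := fun m t => norm_F_aux _ σ t (c m)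
  have hFc : ∀ m, Continuous (F m) := by
    intro m
    exact continuous_const.mul (Complex.continuous_exp.comp
      (((continuous_const).add (Complex.continuous_ofReal.mul continuous_const)).mul continuous_const))
  -- swap sum and integral
  have hswap : ∀ T : ℝ, HasSum (fun m => ∫ t in (0:ℝ)..T, F m t) (∫ t in (0:ℝ)..T, G t) := by
    intro T
    apply intervalIntegral.hasSum_integral_of_dominated_convergence
      (bound := fun m _ => bound m)
      (fun m => (hFc m).aestronglyMeasurable)
    · intro m
      filter_upwards with t _
      rw [hFnorm]
    · filter_upwards with t _
      exact hS
    · exact intervalIntegrable_const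
    · filter_upwards with t _
      exact hsum t
  -- the averaged terms
  set S : ℕ → ℝ → ℂ := fun m T => (1/(T:ℂ)) * ∫ t in (0:ℝ)..T, F m t with hSdef
  have hrw : ∀ T : ℝ, (1/(T:ℂ)) * ∫ t in (0:ℝ)..T, G t = ∑' m, S m T := by
    intro T
    rw [← ((hswap T).mul_left (1/(T:ℂ))).tsum_eq]
  have hSbound : ∀ T : ℝ, ∀ m, ‖S m T‖ ≤ bound m := by
    intro T m
    rcases eq_or_ne T 0 with rfl | hT
    · simp [hSdef]
      positivity
    · have h1 : ‖∫ t in (0:ℝ)..T, F m t‖ ≤ bound m * |T - 0| := by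
        apply intervalIntegral.norm_integral_le_of_norm_le_const
        intro t _
        rw [hFnorm]
      rw [hSdef]
      simp only [norm_mul, norm_div, norm_one, Complex.norm_real, Real.norm_eq_abs]
      calc (1/|T|) * ‖∫ t in (0:ℝ)..T, F m t‖ ≤ (1/|T|) * (bound m * |T - 0|) := by
            apply mul_le_mul_of_nonneg_left h1 (by positivity)
        _ = bound m := by
            rw [sub_zero]
            have : |T| ≠ 0 := abs_ne_zero.mpr hT
            field_simp
  set L : ℕ → ℂ := fun m => if m + 1 = n then a n else 0 with hL
  have hLim : ∀ m, Tendsto (fun T => S m T) atTop (nhds (L m)) := by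
    intro m
    rcases eq_or_ne (m+1) n with hmn | hmn
    · -- diagonal term
      have hcast : ((m:ℝ)+1) = (n:ℝ) := by exact_mod_cast hmn
      have hc0 : c m = 0 := by rw [hc]; simp [hcast]
      have heq : ∀ T : ℝ, T ≠ 0 → S m T = a n := by
        intro T hT
        rw [hSdef]
        simp only [hF, hc0, Complex.ofReal_zero, mul_zero, Complex.exp_zero, mul_one, hmn]
        rw [intervalIntegral.integral_const]
        rw [sub_zero, Complex.real_smul]
        have hT' : (T:ℂ) ≠ 0 := Complex.ofReal_ne_zero.mpr hT
        field_simp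
      have : L m = a n := by rw [hL]; simp [hmn]
      rw [this]
      apply Tendsto.congr' _ tendsto_const_nhds
      filter_upwards [eventually_ne_atTop (0:ℝ)] with T hT
      exact (heq T hT).symm
    · -- off-diagonal term
      have hcne : c m ≠ 0 := by
        rw [hc]
        intro h
        simp only at h
        have h1 : Real.log (n:ℝ) = Real.log ((m:ℝ)+1) := by linarith
        have hn0 : (0:ℝ) < (n:ℝ) := by exact_mod_cast Nat.pos_of_ne_zero (by omega)
        have hm0 : (0:ℝ) < (m:ℝ)+1 := by positivity
        have : (n:ℝ) = (m:ℝ)+1 := Real.log_injOn_pos (Set.mem_Ioi.mpr hn0) (Set.mem_Ioi.mpr hm0) h1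
        exact hmn (by exact_mod_cast this.symm)
      have hcI : (c m : ℂ) * I ≠ 0 := by
        simp [Complex.ofReal_ne_zero, hcne, Complex.I_ne_zero]
      have hint : ∀ T : ℝ, ∫ t in (0:ℝ)..T, Complex.exp (((σ:ℂ)+t*I) * (c m :ℂ)) =
          Complex.exp ((σ:ℂ)*(c m:ℂ)) *
            ((Complex.exp ((c m :ℂ)*I*T) - 1) / ((c m:ℂ)*I)) := by
        intro T
        have h1 : ∀ t:ℝ, ((σ:ℂ)+t*I) * (c m :ℂ)
            = (σ:ℂ)*(c m:ℂ) + ((c m:ℂ)*I)*t := fun t => by ring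
        simp_rw [h1, Complex.exp_add, intervalIntegral.integral_const_mul]
        rw [integral_exp_mul_complex hcI]
        norm_num
      have hintF : ∀ T : ℝ, ∫ t in (0:ℝ)..T, F m t =
          a (m+1) * (Complex.exp ((σ:ℂ)*(c m:ℂ)) *
            ((Complex.exp ((c m :ℂ)*I*T) - 1) / ((c m:ℂ)*I))) := by
        intro T
        simp only [hF]
        rw [intervalIntegral.integral_const_mul, hint T]
      set K : ℝ := ‖a (m+1)‖ * (Real.exp (σ * c m) * (2/|c m|)) with hK
      have hn1 : ‖Complex.exp ((σ:ℂ)*(c m:ℂ))‖ = Real.exp (σ * c m) := by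
        rw [← Complex.ofReal_mul, Complex.norm_exp, Complex.ofReal_re]
      have hn2 : ∀ T:ℝ, ‖Complex.exp ((c m:ℂ)*I*(T:ℂ))‖ = 1 := by
        intro T
        rw [Complex.norm_exp]
        have : (c m:ℂ)*I*(T:ℂ) = ((c m * T : ℝ):ℂ)*I := by push_cast; ring
        rw [this]
        simp
      have hn3 : ‖(c m:ℂ)*I‖ = |c m| := by
        simp
      have : L m = 0 := by rw [hL]; simp [hmn]
      rw [this]
      apply squeeze_zero_norm' (a := fun T : ℝ => K / T)
      · filter_upwards [eventually_gt_atTop (0:ℝ)] with T hT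
        rw [hSdef]
        simp only
        rw [hintF T]
        rw [norm_mul, norm_mul, norm_mul, norm_div, norm_div, hn1, hn3, norm_one,
          Complex.norm_real, Real.norm_eq_abs, abs_of_pos hT]
        have hb2 : ‖Complex.exp ((c m :ℂ)*I*T) - 1‖ ≤ 2 := by
          calc ‖Complex.exp ((c m :ℂ)*I*T) - 1‖ ≤ ‖Complex.exp ((c m :ℂ)*I*T)‖ + ‖(1:ℂ)‖ :=
                norm_sub_le _ _
            _ = 2 := by rw [hn2 T]; norm_num
        calc 1/T * (‖a (m+1)‖ * (Real.exp (σ * c m) * (‖Complex.exp ((c m :ℂ)*I*T) - 1‖/|c m|)))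
            ≤ 1/T * (‖a (m+1)‖ * (Real.exp (σ * c m) * (2/|c m|))) := by
              gcongr
          _ = K / T := by rw [hK]; ring
      · exact Tendsto.div_atTop tendsto_const_nhds tendsto_id
  have htsum : Tendsto (fun T => ∑' m, S m T) atTop (nhds (∑' m, L m)) :=
    tendsto_tsum_of_dominated_convergence hS hLim
      (Filter.Eventually.of_forall (fun T => hSbound T))
  have hLsum : ∑' m, L m = a n := by
    rw [hL, tsum_eq_single (n-1)]
    · have : (n-1) + 1 = n := by omega
      simp [this]
    · intro m hm
      have : m + 1 ≠ n := by omega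
      simp [this]
  rw [← hLsum]
  exact Tendsto.congr (fun T => (hrw T).symm) htsum

lemma lemB (f : ℂ → ℂ) (n : ℕ) (hn : 1 ≤ n) (σ : ℝ) (hσ : 0 < σ) (C : ℝ)
    (hf : DifferentiableOn ℂ f {s : ℂ | 0 < s.re})
    (hC : ∀ s : ℂ, 0 < s.re → ‖f s‖ ≤ C)
    (fb : ℝ → ℂ)
    (hfb : ∀ᵐ t : ℝ ∂volume,
      Tendsto (fun σ : ℝ => f (σ + t * I)) (nhdsWithin 0 (Set.Ioi 0)) (nhds (fb t)))
    (T : ℝ) (_hT : 0 < T) :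
    ‖(∫ t in (0:ℝ)..T, fb t * Complex.exp ((t:ℂ) * I * (Real.log n : ℂ)))
      - ∫ t in (0:ℝ)..T, f ((σ:ℂ) + t*I) * Complex.exp (((σ:ℂ) + t*I) * (Real.log n : ℂ))‖
      ≤ 2 * (C * Real.exp (σ * Real.log n) * σ) := by
  have hC0 : 0 ≤ C := le_trans (norm_nonneg (f 1)) (hC 1 (by norm_num))
  set g : ℂ → ℂ := fun s => f s * Complex.exp (s * (Real.log n : ℂ)) with hg
  set Kn : ℝ := Real.exp (σ * Real.log n) with hKn
  have hlogn : 0 ≤ Real.log n := Real.log_nonneg (by exact_mod_cast hn)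
  have hren : ∀ s : ℂ, (s * (Real.log n : ℂ)).re = s.re * Real.log n := by
    intro s
    simp only [Complex.mul_re, Complex.ofReal_re, Complex.ofReal_im, mul_zero, sub_zero]
  have hgnorm : ∀ s : ℂ, 0 < s.re → s.re ≤ σ → ‖g s‖ ≤ C * Kn := by
    intro s hs1 hs2
    rw [hg]
    simp only
    rw [norm_mul, Complex.norm_exp, hren]
    apply mul_le_mul (hC s hs1) _ (Real.exp_nonneg _) hC0
    rw [hKn]
    exact Real.exp_le_exp.mpr (by nlinarith)
  have hgdiff : DifferentiableOn ℂ g {s : ℂ | 0 < s.re} := by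
    apply hf.mul
    apply Differentiable.differentiableOn
    exact Complex.differentiable_exp.comp (differentiable_id.mul (differentiable_const _))
  -- rectangle identity and bound, for ε ∈ Ioo 0 σ
  have hrect : ∀ ε : ℝ, ε ∈ Set.Ioo 0 σ →
      ‖(∫ t in (0:ℝ)..T, g ((ε:ℂ) + t*I)) - ∫ t in (0:ℝ)..T, g ((σ:ℂ) + t*I)‖
        ≤ 2 * (C * Kn * σ) := by
    intro ε ⟨hε0, hεσ⟩
    have key := Complex.integral_boundary_rect_eq_zero_of_differentiableOn g (ε:ℂ)
      ((σ:ℂ) + T*I) (by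
        apply hgdiff.mono
        intro z hz
        rw [Complex.mem_reProdIm] at hz
        obtain ⟨hz1, -⟩ := hz
        simp only [Complex.ofReal_re, Complex.add_re, Complex.mul_re, Complex.I_re,
          Complex.ofReal_im, Complex.I_im] at hz1
        have hz1' : z.re ∈ Set.uIcc ε σ := by convert hz1 using 2; ring
        rw [Set.uIcc_of_le hεσ.le] at hz1'
        exact lt_of_lt_of_le hε0 hz1'.1)
    simp only [Complex.add_re, Complex.add_im, Complex.ofReal_re, Complex.ofReal_im,
      Complex.mul_re, Complex.mul_im, Complex.I_re, Complex.I_im, mul_zero, mul_one,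
      zero_mul, sub_zero, zero_sub, add_zero, zero_add, Complex.ofReal_zero, neg_zero,
      sub_self] at key
    rw [smul_eq_mul, smul_eq_mul] at key
    have h1 : Complex.I * ((∫ t in (0:ℝ)..T, g ((ε:ℂ) + t*I)) - ∫ t in (0:ℝ)..T, g ((σ:ℂ) + t*I))
        = (∫ (x : ℝ) in ε..σ, g ↑x) - ∫ (x : ℝ) in ε..σ, g (↑x + ↑T * I) := by
      linear_combination -key
    have h2 : ‖(∫ t in (0:ℝ)..T, g ((ε:ℂ) + t*I)) - ∫ t in (0:ℝ)..T, g ((σ:ℂ) + t*I)‖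
        = ‖(∫ (x : ℝ) in ε..σ, g ↑x) - ∫ (x : ℝ) in ε..σ, g (↑x + ↑T * I)‖ := by
      rw [← h1, norm_mul, Complex.norm_I, one_mul]
    have hmem : ∀ x ∈ Set.uIoc ε σ, 0 < x ∧ x ≤ σ := by
      intro x hx
      rw [Set.uIoc_of_le hεσ.le] at hx
      exact ⟨lt_trans hε0 hx.1, hx.2⟩
    have hA : ‖∫ (x : ℝ) in ε..σ, g ↑x‖ ≤ C * Kn * |σ - ε| := by
      apply intervalIntegral.norm_integral_le_of_norm_le_const
      intro x hx
      exact hgnorm _ (by simpa using (hmem x hx).1) (by simpa using (hmem x hx).2)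
    have hB : ‖∫ (x : ℝ) in ε..σ, g (↑x + ↑T * I)‖ ≤ C * Kn * |σ - ε| := by
      apply intervalIntegral.norm_integral_le_of_norm_le_const
      intro x hx
      have hre : ((x:ℂ) + ↑T * I).re = x := by simp
      exact hgnorm _ (by rw [hre]; exact (hmem x hx).1) (by rw [hre]; exact (hmem x hx).2)
    have hKn0 : 0 ≤ C * Kn := mul_nonneg hC0 (Real.exp_nonneg _)
    have habs : |σ - ε| ≤ σ := by rw [abs_of_pos (by linarith)]; linarith
    rw [h2]
    calc ‖(∫ (x : ℝ) in ε..σ, g ↑x) - ∫ (x : ℝ) in ε..σ, g (↑x + ↑T * I)‖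
        ≤ ‖∫ (x : ℝ) in ε..σ, g ↑x‖ + ‖∫ (x : ℝ) in ε..σ, g (↑x + ↑T * I)‖ := norm_sub_le _ _
      _ ≤ C * Kn * |σ - ε| + C * Kn * |σ - ε| := add_le_add hA hB
      _ ≤ 2 * (C * Kn * σ) := by nlinarith
  have hconv : Tendsto (fun ε : ℝ => ∫ t in (0:ℝ)..T, g ((ε:ℂ) + t*I))
      (nhdsWithin 0 (Set.Ioi 0))
      (nhds (∫ t in (0:ℝ)..T, fb t * Complex.exp ((t:ℂ) * I * (Real.log n : ℂ)))) := by
    apply intervalIntegral.tendsto_integral_filter_of_dominated_convergence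
      (bound := fun _ => C * Kn)
    · filter_upwards [self_mem_nhdsWithin] with ε hε
      have hε0 : (0:ℝ) < ε := hε
      apply Continuous.aestronglyMeasurable
      have hcont1 : Continuous fun t : ℝ => (ε:ℂ) + (t:ℂ)*I := by continuity
      have hmap : ∀ t : ℝ, (ε:ℂ) + (t:ℂ)*I ∈ {s : ℂ | 0 < s.re} := by
        intro t; simp [Set.mem_setOf_eq, hε0]
      exact ((hf.continuousOn.comp_continuous hcont1 hmap).mul
        (Complex.continuous_exp.comp (hcont1.mul continuous_const)))
    · filter_upwards [Ioc_mem_nhdsGT_of_mem (Set.mem_Ico.mpr ⟨le_refl 0, hσ⟩)] with ε hε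
      filter_upwards with t ht
      exact hgnorm _ (by simp [hε.1]) (by simp [hε.2])
    · exact intervalIntegrable_const
    · filter_upwards [hfb] with t ht
      intro _
      have hexp : Tendsto (fun ε : ℝ => Complex.exp (((ε:ℂ) + (t:ℂ)*I) * (Real.log n : ℂ)))
          (nhdsWithin 0 (Set.Ioi 0)) (nhds (Complex.exp ((t:ℂ)*I*(Real.log n : ℂ)))) := by
        have hcont : Continuous fun ε : ℝ =>
            Complex.exp (((ε:ℂ) + (t:ℂ)*I) * (Real.log n : ℂ)) := by continuity
        have h0 := (hcont.tendsto 0).mono_left (nhdsWithin_le_nhds (s := Set.Ioi (0:ℝ)))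
        simpa using h0
      exact ht.mul hexp
  have hfinal := ((hconv.sub (tendsto_const_nhds
      (x := ∫ t in (0:ℝ)..T, g ((σ:ℂ) + t*I)))).norm)
  apply le_of_tendsto hfinal
  filter_upwards [Ioo_mem_nhdsGT_of_mem (Set.mem_Ico.mpr ⟨le_refl 0, hσ⟩)] with ε hε
  exact hrect ε hε

lemma norm_cpow_aux (m : ℕ) (σ : ℝ) :
    ‖((m+1:ℕ):ℂ)^(-(σ:ℂ))‖ = Real.exp (-(σ * Real.log ((m:ℝ)+1))) := by
  rw [← Complex.ofReal_natCast,
    Complex.norm_cpow_eq_rpow_re_of_pos (by positivity),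
    Real.rpow_def_of_pos (by positivity)]
  push_cast
  simp only [Complex.neg_re, Complex.ofReal_re]
  ring_nf

lemma cpow_exp_aux (n : ℕ) (hn : 1 ≤ n) (z : ℂ) :
    (n : ℂ) ^ z = Complex.exp (z * (Real.log n : ℂ)) := by
  have hN : (n : ℂ) ≠ 0 := Nat.cast_ne_zero.mpr (by omega)
  rw [Complex.cpow_def_of_ne_zero hN, ← Complex.ofReal_natCast,
    Complex.ofReal_log (Nat.cast_nonneg _)]
  ring_nf

/-- For a bounded analytic function on `Re s > 0` represented by a Dirichlet series
`∑ aₙ n^{-s}` in some half-plane, with a.e. boundary values `fb` on the imaginary axis,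
each coefficient is recovered as `aₙ = lim_{T→∞} (1/T) ∫_0^T f(it) n^{it} dt`. -/
theorem coefficients_from_boundary_values (f : ℂ → ℂ) (a : ℕ → ℂ) (σ₀ : ℝ) (fb : ℝ → ℂ)
    (hf : DifferentiableOn ℂ f {s : ℂ | 0 < s.re})
    (hbdd : ∃ C : ℝ, ∀ s : ℂ, 0 < s.re → ‖f s‖ ≤ C)
    (hrep : ∀ s : ℂ, σ₀ < s.re →
      HasSum (fun n : ℕ => a (n + 1) * ((n + 1 : ℕ) : ℂ) ^ (-s)) (f s))
    (hfb : ∀ᵐ t : ℝ ∂volume,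
      Tendsto (fun σ : ℝ => f (σ + t * I)) (nhdsWithin 0 (Set.Ioi 0)) (nhds (fb t))) :
    ∀ n : ℕ, 1 ≤ n →
      Tendsto (fun T : ℝ => (1 / (T : ℂ)) * ∫ t in (0:ℝ)..T, fb t * (n : ℂ) ^ ((t : ℂ) * I))
        atTop (nhds (a n)) := by
  intro n hn
  obtain ⟨C, hC⟩ := hbdd
  set σ : ℝ := max σ₀ 0 + 1 with hσdef
  have hσpos : 0 < σ := by
    have := le_max_right σ₀ 0; simp only [hσdef]; linarith
  have hσ0 : σ₀ < σ := by
    have := le_max_left σ₀ 0; simp only [hσdef]; linarith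
  set G : ℝ → ℂ := fun t => f ((σ:ℂ) + t*I) * Complex.exp (((σ:ℂ) + t*I) * (Real.log n : ℂ))
    with hG
  -- Lemma A ingredients
  have hsum : ∀ t : ℝ, HasSum (fun m : ℕ =>
      a (m+1) * Complex.exp (((σ:ℂ) + t*I) * ((Real.log n - Real.log (m+1) : ℝ) : ℂ))) (G t) := by
    intro t
    set s : ℂ := (σ:ℂ) + t*I with hs
    have hsre : σ₀ < s.re := by
      rw [hs]; simpa using hσ0
    have h2 : (fun m : ℕ => a (m+1) * Complex.exp (s * ((Real.log n - Real.log (m+1) : ℝ) : ℂ)))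
        = fun m : ℕ => (a (m+1) * ((m+1:ℕ):ℂ)^(-s)) * Complex.exp (s * (Real.log n : ℂ)) :=
      funext fun m => by rw [mul_assoc, exp_sub_aux]
    rw [hG]
    simp only [← hs]
    rw [h2]
    exact (hrep s hsre).mul_right _
  have hsre' : σ₀ < ((σ:ℂ)).re := by simpa using hσ0
  have hS : Summable (fun m : ℕ => ‖a (m+1)‖ * Real.exp (σ * (Real.log n - Real.log (m+1)))) := by
    have h1 := (summable_norm_iff.mpr (hrep (σ:ℂ) hsre').summable).mul_left
      (Real.exp (σ * Real.log n))
    apply h1.congr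
    intro m
    rw [norm_mul, norm_cpow_aux m σ]
    rw [← mul_assoc, mul_comm (Real.exp (σ * Real.log ↑n)) ‖a (m+1)‖, mul_assoc,
      ← Real.exp_add]
    congr 2
    ring
  have hA := lemA a n hn σ G hsum hS
  -- Lemma B : uniform bound on the difference
  set K : ℝ := 2 * (C * Real.exp (σ * Real.log n) * σ) with hK
  have hB : ∀ T : ℝ, 0 < T →
      ‖(∫ t in (0:ℝ)..T, fb t * Complex.exp ((t:ℂ) * I * (Real.log n : ℂ)))
        - ∫ t in (0:ℝ)..T, G t‖ ≤ K := by
    intro T hT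
    exact lemB f n hn σ hσpos C hf hC fb hfb T hT
  -- rewrite the target integrand in exponential form
  have hgoal : (fun T : ℝ => (1 / (T : ℂ)) * ∫ t in (0:ℝ)..T, fb t * (n : ℂ) ^ ((t : ℂ) * I))
      = fun T : ℝ => (1 / (T : ℂ)) *
        ∫ t in (0:ℝ)..T, fb t * Complex.exp ((t:ℂ) * I * (Real.log n : ℂ)) := by
    funext T
    congr 1
    apply intervalIntegral.integral_congr
    intro t _
    simp only
    rw [cpow_exp_aux n hn]
  rw [hgoal]
  -- split into the interior part and the error part
  have hzero : Tendsto (fun T : ℝ => (1 / (T : ℂ)) *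
      ((∫ t in (0:ℝ)..T, fb t * Complex.exp ((t:ℂ) * I * (Real.log n : ℂ)))
        - ∫ t in (0:ℝ)..T, G t)) atTop (nhds 0) := by
    apply squeeze_zero_norm' (a := fun T : ℝ => K / T)
    · filter_upwards [eventually_gt_atTop (0:ℝ)] with T hT
      rw [norm_mul, norm_div, norm_one, Complex.norm_real, Real.norm_eq_abs, abs_of_pos hT]
      calc 1 / T * ‖(∫ t in (0:ℝ)..T, fb t * Complex.exp ((t:ℂ) * I * (Real.log n : ℂ)))
            - ∫ t in (0:ℝ)..T, G t‖ ≤ 1 / T * K := by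
            apply mul_le_mul_of_nonneg_left (hB T hT) (by positivity)
        _ = K / T := by ring
    · exact Tendsto.div_atTop tendsto_const_nhds tendsto_id
  have hcomb := hA.add hzero
  rw [add_zero] at hcomb
  apply hcomb.congr
  intro T
  ring
end

section
/- There exists an absolute constant C such that for every Dirichlet series f(s) = ∑_{n=1}^∞ a_n n^{-s} with ∑ |a_n|² < ∞ and for every real θ, ∫_θ^{θ+1} |f(1/2 + it)|² dt ≤ C ∑_{n=1}^∞ |a_n|². -/
open MeasureTheory Complex Real FourierTransform


noncomputable def Tri : ℝ → ℂ := fun ξ => ((max 0 (1 - |ξ|) : ℝ) : ℂ)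

noncomputable def fej : ℝ → ℝ := fun t =>
  if t = 0 then 1 else (1 - Real.cos (2 * π * t)) / (2 * π ^ 2 * t ^ 2)

lemma integral01 (a : ℝ) (ha : a ≠ 0) :
    ∫ ξ in (0:ℝ)..1, ((1 - ξ : ℝ) : ℂ) * Complex.exp (-(a * ξ) * I) =
      (1 - a * I - Complex.exp (-a * I)) / a ^ 2 := by
  have haC : (a : ℂ) ≠ 0 := by exact_mod_cast ha
  set P : ℂ := -1 + a * I with hP
  have key : ∀ ξ : ℝ, HasDerivAt (fun ξ : ℝ => Complex.exp (-(a * ξ) * I) * (P - a * I * ξ))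
      ((a:ℂ)^2 * (((1 - ξ : ℝ) : ℂ) * Complex.exp (-(a * ξ) * I))) ξ := by
    intro ξ
    have h1 : HasDerivAt (fun ξ : ℝ => (ξ : ℂ)) 1 ξ := (hasDerivAt_id (ξ:ℂ)).comp_ofReal
    have h2 : HasDerivAt (fun ξ : ℝ => -(a * (ξ:ℂ)) * I) (-(a:ℂ) * I) ξ := by
      simpa using ((h1.const_mul (a:ℂ)).neg.mul_const I)
    have h3 : HasDerivAt (fun ξ : ℝ => Complex.exp (-(a * (ξ:ℂ)) * I))
        (Complex.exp (-(a * (ξ:ℂ)) * I) * (-(a:ℂ) * I)) ξ := h2.cexp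
    have h4 : HasDerivAt (fun ξ : ℝ => P - (a:ℂ) * I * ξ) (-(a:ℂ) * I) ξ := by
      simpa using ((h1.const_mul ((a:ℂ) * I)).const_sub P)
    have := h3.mul h4
    convert this using 1
    · rfl
    · rfl
    push_cast
    rw [hP]
    ring_nf
    rw [Complex.I_sq]
    ring
  have := intervalIntegral.integral_eq_sub_of_hasDerivAt (a := (0:ℝ)) (b := 1)
    (fun ξ _ => key ξ) (by apply Continuous.intervalIntegrable; continuity)
  rw [intervalIntegral.integral_const_mul] at this
  have h20 : (∫ ξ in (0:ℝ)..1, ((1 - ξ : ℝ) : ℂ) * Complex.exp (-(a * ξ) * I))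
      = (Complex.exp (-(a * (1:ℝ)) * I) * (P - a * I * (1:ℝ)) -
         Complex.exp (-(a * (0:ℝ)) * I) * (P - a * I * (0:ℝ))) / a ^ 2 := by
    rw [eq_div_iff (pow_ne_zero 2 haC)]
    linear_combination this
  rw [h20]
  push_cast
  rw [hP]
  simp only [mul_one, mul_zero, neg_zero, zero_mul, Complex.exp_zero]
  ring_nf

lemma continuous_Tri : Continuous Tri :=
  Complex.continuous_ofReal.comp (continuous_const.max (continuous_const.sub continuous_abs))

lemma fourier_Tri (t : ℝ) : 𝓕 Tri t = (fej t : ℂ) := by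
  have step1 : 𝓕 Tri t = ∫ ξ in (-1:ℝ)..1, Complex.exp (↑(-2 * π * ξ * t) * I) • Tri ξ := by
    rw [Real.fourier_real_eq_integral_exp_smul]
    rw [← MeasureTheory.setIntegral_eq_integral_of_forall_compl_eq_zero (s := Set.Ioc (-1:ℝ) 1)]
    · rw [intervalIntegral.integral_of_le (by norm_num : (-1:ℝ) ≤ 1)]
    intro ξ hξ
    have : 1 - |ξ| ≤ 0 := by
      simp only [Set.mem_Ioc, not_and_or, not_lt, not_le] at hξ
      rcases hξ with h | h
      · rw [_root_.abs_of_nonpos (by linarith)]; linarith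
      · rw [_root_.abs_of_nonneg (by linarith)]; linarith
    simp [Tri, max_eq_left this]
  set a : ℝ := 2 * π * t with ha
  have cont : ∀ b c : ℝ, IntervalIntegrable
      (fun ξ : ℝ => Complex.exp (↑(-2 * π * ξ * t) * I) • Tri ξ) volume b c := by
    intro b c
    exact (((Complex.continuous_ofReal.comp (by continuity)).mul
      continuous_const).cexp.smul continuous_Tri).intervalIntegrable _ _
  have split : 𝓕 Tri t = (∫ ξ in (-1:ℝ)..0, Complex.exp (↑(-2 * π * ξ * t) * I) • Tri ξ)
      + ∫ ξ in (0:ℝ)..1, Complex.exp (↑(-2 * π * ξ * t) * I) • Tri ξ := by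
    rw [step1, intervalIntegral.integral_add_adjacent_intervals (cont _ _) (cont _ _)]
  have hright : (∫ ξ in (0:ℝ)..1, Complex.exp (↑(-2 * π * ξ * t) * I) • Tri ξ)
      = ∫ ξ in (0:ℝ)..1, ((1 - ξ : ℝ) : ℂ) * Complex.exp (-(a * ξ) * I) := by
    apply intervalIntegral.integral_congr
    intro ξ hξ
    rw [Set.uIcc_of_le (by norm_num : (0:ℝ) ≤ 1)] at hξ
    obtain ⟨h0, h1⟩ := hξ
    show Complex.exp (↑(-2 * π * ξ * t) * I) • Tri ξ = ((1 - ξ : ℝ) : ℂ) * Complex.exp (-(a * ξ) * I)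
    have hT : Tri ξ = ((1 - ξ : ℝ) : ℂ) := by
      unfold Tri; rw [_root_.abs_of_nonneg h0, max_eq_right (by linarith)]
    rw [hT, smul_eq_mul, mul_comm]
    congr 2
    simp only [ha]
    push_cast
    ring
  have hneg := intervalIntegral.integral_comp_neg (a := (0:ℝ)) (b := 1)
      (fun ξ => Complex.exp (↑(-2 * π * ξ * t) * I) • Tri ξ)
  rw [neg_zero] at hneg
  have hleft : (∫ ξ in (-1:ℝ)..0, Complex.exp (↑(-2 * π * ξ * t) * I) • Tri ξ)
      = ∫ ξ in (0:ℝ)..1, ((1 - ξ : ℝ) : ℂ) * Complex.exp (-(((-a : ℝ) : ℂ) * ξ) * I) := by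
    rw [← hneg]
    apply intervalIntegral.integral_congr
    intro ξ hξ
    rw [Set.uIcc_of_le (by norm_num : (0:ℝ) ≤ 1)] at hξ
    obtain ⟨h0, h1⟩ := hξ
    show Complex.exp (↑(-2 * π * (-ξ) * t) * I) • Tri (-ξ) = ((1 - ξ : ℝ) : ℂ) * Complex.exp (-(((-a : ℝ) : ℂ) * ξ) * I)
    have hT : Tri (-ξ) = ((1 - ξ : ℝ) : ℂ) := by
      unfold Tri; rw [abs_neg, _root_.abs_of_nonneg h0, max_eq_right (by linarith)]
    rw [hT, smul_eq_mul, mul_comm]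
    congr 2
    simp only [ha]
    push_cast
    ring
  rcases eq_or_ne t 0 with rfl | ht
  · have ha0 : a = 0 := by simp [ha]
    rw [split, hright, hleft, ha0]
    norm_num
    have h12 : (∫ ξ in (0:ℝ)..1, (1 - (ξ:ℂ))) = 1/2 := by
      have : (∀ ξ : ℝ, (1 - (ξ:ℂ)) = ((1 - ξ : ℝ):ℂ)) := by intro ξ; push_cast; ring
      simp_rw [this]
      rw [intervalIntegral.integral_ofReal]
      rw [intervalIntegral.integral_sub intervalIntegrable_const
        intervalIntegral.intervalIntegrable_id, integral_id, intervalIntegral.integral_const]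
      norm_num
    rw [h12]
    norm_num [fej]
  · have ha' : a ≠ 0 := by
      simp only [ha]
      positivity
    have haC : (a : ℂ) ≠ 0 := by exact_mod_cast ha'
    rw [split, hright, hleft, integral01 a ha', integral01 (-a) (by simpa using ha')]
    have hexp : Complex.exp ((a:ℝ) * I) + Complex.exp (-(a:ℝ) * I) = 2 * (Real.cos a : ℂ) := by
      rw [show -((a:ℝ):ℂ) * I = (((-a : ℝ)):ℂ) * I by push_cast; ring]
      rw [Complex.exp_mul_I, Complex.exp_mul_I, ← Complex.ofReal_cos, ← Complex.ofReal_cos,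
        ← Complex.ofReal_sin, ← Complex.ofReal_sin]
      push_cast [Real.cos_neg, Real.sin_neg]
      ring
    have hfej : ((fej t : ℝ) : ℂ) = (2 - 2 * (Real.cos a : ℂ)) / (a:ℂ)^2 := by
      rw [show fej t = (1 - Real.cos (2*π*t))/(2*π^2*t^2) from if_neg ht]
      have hπ : (π : ℝ) ≠ 0 := Real.pi_ne_zero
      rw [ha]
      have hπC : ((π:ℝ):ℂ) ≠ 0 := by exact_mod_cast Real.pi_ne_zero
      have htC : ((t:ℝ):ℂ) ≠ 0 := by exact_mod_cast ht
      push_cast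
      field_simp
    rw [hfej]
    rw [show (((-a : ℝ)):ℂ) = -(a:ℂ) by push_cast; ring]
    have e : Complex.exp (-((a:ℂ)*I)) = Complex.exp (-(a:ℂ)*I) := by ring_nf
    field_simp
    linear_combination (-1 : ℂ) * hexp - e

lemma fej_nonneg (t : ℝ) : 0 ≤ fej t := by
  unfold fej
  split_ifs with h
  · norm_num
  · apply div_nonneg
    · linarith [Real.cos_le_one (2 * π * t)]
    · positivity

lemma fej_le_one (t : ℝ) : fej t ≤ 1 := by
  unfold fej
  split_ifs with h
  · norm_num
  · rw [div_le_one (by positivity)]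
    nlinarith [Real.one_sub_sq_div_two_le_cos (x := 2 * π * t), Real.pi_pos, sq_nonneg t]

lemma fej_lower {s : ℝ} (hs : |s| ≤ 1/2) : 4 / π ^ 2 ≤ fej s := by
  unfold fej
  split_ifs with h
  · rw [div_le_one (by positivity)]
    nlinarith [Real.pi_gt_three]
  · rw [le_div_iff₀ (by positivity)]
    have hx : |2 * π * s| ≤ π := by
      rw [abs_mul, abs_mul]
      rw [_root_.abs_of_nonneg (by norm_num : (0:ℝ) ≤ 2), _root_.abs_of_nonneg Real.pi_pos.le]
      nlinarith [Real.pi_pos]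
    have := Real.cos_le_one_sub_mul_cos_sq hx
    have hπ := Real.pi_pos
    have e1 : 4 / π ^ 2 * (2 * π ^ 2 * s ^ 2) = 8 * s ^ 2 := by field_simp; ring
    have e2 : 2 / π ^ 2 * (2 * π * s) ^ 2 = 8 * s ^ 2 := by field_simp; ring
    linarith

lemma fej_measurable : Measurable fej := by
  unfold fej
  exact Measurable.ite (measurableSet_eq_fun measurable_id measurable_const) measurable_const
    ((measurable_const.sub ((measurable_const.mul measurable_id).cos)).div
      ((measurable_const.mul (measurable_id.pow_const 2))))

lemma fej_integrable : Integrable fej := by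
  have hmaj : ∀ t : ℝ, ‖fej t‖ ≤ 2 * (1 + t ^ 2)⁻¹ := by
    intro t
    rw [Real.norm_eq_abs, _root_.abs_of_nonneg (fej_nonneg t)]
    rcases le_or_gt (t ^ 2) 1 with h | h
    · calc fej t ≤ 1 := fej_le_one t
        _ ≤ 2 * (1 + t ^ 2)⁻¹ := by
          rw [le_mul_inv_iff₀ (by positivity)]
          linarith
    · have ht : t ≠ 0 := by rintro rfl; norm_num at h
      unfold fej
      rw [if_neg ht]
      rw [div_le_iff₀ (by positivity)]
      have h1 : 1 - Real.cos (2 * π * t) ≤ 2 := by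
        linarith [Real.neg_one_le_cos (2 * π * t)]
      have hπ := Real.pi_gt_three
      have : 2 * (1 + t ^ 2)⁻¹ * (2 * π ^ 2 * t ^ 2) = 4 * π ^ 2 * (t ^ 2 / (1 + t^2)) := by
        field_simp
        ring
      rw [this]
      have h2 : (1:ℝ)/2 ≤ t ^ 2 / (1 + t ^ 2) := by
        rw [div_le_div_iff₀ (by norm_num) (by positivity)]
        linarith
      nlinarith
  apply (integrable_inv_one_add_sq.const_mul 2).mono
    (fej_measurable.aestronglyMeasurable)
  exact Filter.Eventually.of_forall (fun t => by
    have h2 : ‖2 * (1 + t^2)⁻¹‖ = 2 * (1 + t^2)⁻¹ := by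
      rw [Real.norm_eq_abs, _root_.abs_of_nonneg (by positivity)]
    rw [h2]; exact hmaj t)

lemma fejC_integrable : Integrable (fun t : ℝ => (fej t : ℂ)) := fej_integrable.ofReal

lemma Tri_integrable : Integrable Tri := by
  apply Continuous.integrable_of_hasCompactSupport continuous_Tri
  apply HasCompactSupport.intro (isCompact_Icc (a := (-1:ℝ)) (b := 1))
  intro ξ hξ
  simp only [Set.mem_Icc, not_and_or, not_le] at hξ
  have : 1 - |ξ| ≤ 0 := by
    rcases hξ with h | h
    · rw [_root_.abs_of_nonpos (by linarith)]; linarith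
    · rw [_root_.abs_of_nonneg (by linarith)]; linarith
  simp [Tri, max_eq_left this]

lemma fourier_fej (μ : ℝ) : 𝓕 (fun t : ℝ => (fej t : ℂ)) μ = Tri μ := by
  have hFT : 𝓕 Tri = fun t : ℝ => (fej t : ℂ) := funext fourier_Tri
  have hinv := continuous_Tri.fourierInv_fourier_eq Tri_integrable (by rw [hFT]; exact fejC_integrable)
  have h1 : 𝓕 (fun t : ℝ => (fej t : ℂ)) μ = 𝓕⁻ (𝓕 Tri) (-μ) := by
    rw [hFT, Real.fourierInv_eq_fourier_neg, neg_neg]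
  rw [h1, hinv]
  unfold Tri
  rw [abs_neg]

lemma key_integral (μ c : ℝ) :
    ∫ t : ℝ, Complex.exp (-(t * μ) * I) * (fej (t - c) : ℂ) =
      Complex.exp (-((c : ℂ) * μ) * I) * Tri (μ / (2 * π)) := by
  have step3 : ∫ s : ℝ, Complex.exp (-(s * μ) * I) * (fej s : ℂ) = Tri (μ / (2 * π)) := by
    rw [← fourier_fej (μ / (2 * π)), Real.fourier_real_eq_integral_exp_smul]
    congr 1
    funext v
    rw [smul_eq_mul]
    congr 2
    have hπ : (π : ℝ) ≠ 0 := Real.pi_ne_zero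
    have : -2 * π * v * (μ / (2 * π)) = -(v * μ) := by field_simp
    rw [this]
    push_cast
    ring
  have step1 : (∫ t : ℝ, Complex.exp (-(t * μ) * I) * (fej (t - c) : ℂ)) =
      ∫ s : ℝ, Complex.exp (-(((s : ℂ) + c) * μ) * I) * (fej s : ℂ) := by
    rw [← integral_sub_right_eq_self
      (fun s : ℝ => Complex.exp (-(((s : ℂ) + c) * μ) * I) * (fej s : ℂ)) c]
    congr 1
    funext t
    push_cast
    ring_nf
  rw [step1]
  have : ∀ s : ℝ, Complex.exp (-(((s : ℂ) + c) * μ) * I) * (fej s : ℂ) =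
      Complex.exp (-((c:ℂ) * μ) * I) * (Complex.exp (-((s:ℂ) * μ) * I) * (fej s : ℂ)) := by
    intro s
    rw [← mul_assoc, ← Complex.exp_add]
    ring_nf
  simp_rw [this]
  rw [integral_const_mul, step3]

noncomputable def triR : ℝ → ℝ := fun x => max 0 (1 - |x|)

lemma triR_nonneg (x : ℝ) : 0 ≤ triR x := le_max_left _ _
lemma triR_le_one (x : ℝ) : triR x ≤ 1 := by
  unfold triR
  rcases le_or_gt (1 - |x|) 0 with h | h
  · rw [max_eq_left h]; norm_num
  · rw [max_eq_right h.le]; linarith [abs_nonneg x]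

lemma sum_inv_sqrt (M : ℕ) : ∑ n ∈ Finset.Icc 1 M, (Real.sqrt n)⁻¹ ≤ 2 * Real.sqrt M := by
  induction M with
  | zero => simp
  | succ M ih =>
    rw [Finset.sum_Icc_succ_top (by omega : 1 ≤ M + 1)]
    have h1 : Real.sqrt M ≤ Real.sqrt (M + 1) := by
      apply Real.sqrt_le_sqrt; push_cast; linarith
    have h2 : (0:ℝ) < Real.sqrt (M + 1) := by
      apply Real.sqrt_pos.mpr; push_cast; linarith
    have h3 : Real.sqrt (M+1) ^ 2 = (M:ℝ) + 1 := by
      rw [Real.sq_sqrt]; push_cast; ring; push_cast; positivity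
    have h4 : Real.sqrt M ^ 2 = (M:ℝ) := Real.sq_sqrt (by positivity)
    have h5 : (Real.sqrt ((M:ℝ) + 1))⁻¹ ≤ 2 * (Real.sqrt (M + 1) - Real.sqrt M) := by
      rw [inv_le_iff_one_le_mul₀ h2]
      nlinarith [Real.sqrt_nonneg M]
    push_cast at *
    nlinarith [Real.sqrt_nonneg M]

lemma support_bound {m n : ℕ} (hm : 1 ≤ m) (hn : 1 ≤ n)
    (h : triR ((Real.log m - Real.log n) / (2 * π)) ≠ 0) : n ≤ 1200 * m := by
  have habs : |Real.log m - Real.log n| < 2 * π := by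
    by_contra hc
    push_neg at hc
    apply h
    unfold triR
    have h2π : (0:ℝ) < 2 * π := by positivity
    rw [max_eq_left]
    rw [sub_nonpos, abs_div, _root_.abs_of_nonneg h2π.le, le_div_iff₀ h2π]
    linarith
  have hlog : Real.log n < Real.log m + 7 := by
    have : Real.log n - Real.log m < 2 * π := by
      calc Real.log n - Real.log m ≤ |Real.log m - Real.log n| := by
            rw [abs_sub_comm]; exact le_abs_self _
        _ < 2 * π := habs
    have hpi : π < 3.15 := Real.pi_lt_d2
    linarith
  have he7 : Real.exp 7 < 1200 := by
    have h1 : Real.exp 1 < 2.7182818286 := Real.exp_one_lt_d9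
    have h7 : Real.exp 7 = Real.exp 1 ^ 7 := by
      rw [← Real.exp_nat_mul]; norm_num
    rw [h7]
    calc Real.exp 1 ^ 7 < 2.7182818286 ^ 7 := by
          apply pow_lt_pow_left₀ h1 (Real.exp_pos 1).le; norm_num
      _ < 1200 := by norm_num
  have hmpos : (0:ℝ) < m := by exact_mod_cast hm
  have hnpos : (0:ℝ) < n := by exact_mod_cast hn
  have : (n:ℝ) < 1200 * m := by
    have h1 : (n:ℝ) = Real.exp (Real.log n) := (Real.exp_log hnpos).symm
    have h2 : (m:ℝ) = Real.exp (Real.log m) := (Real.exp_log hmpos).symm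
    rw [h1, h2]
    calc Real.exp (Real.log n) < Real.exp (Real.log m + 7) := Real.exp_lt_exp.mpr hlog
      _ = Real.exp 7 * Real.exp (Real.log m) := by rw [Real.exp_add]; ring
      _ < 1200 * Real.exp (Real.log m) := by
          apply mul_lt_mul_of_pos_right he7 (Real.exp_pos _)
  exact_mod_cast le_of_lt (by exact_mod_cast this : (n:ℝ) < ((1200 * m : ℕ) : ℝ))

noncomputable def wker (m n : ℕ) : ℝ :=
  (Real.sqrt m * Real.sqrt n)⁻¹ * triR ((Real.log m - Real.log n) / (2 * π))

lemma wker_nonneg (m n : ℕ) : 0 ≤ wker m n := by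
  apply mul_nonneg _ (triR_nonneg _)
  positivity

lemma wker_symm (m n : ℕ) : wker m n = wker n m := by
  unfold wker triR
  rw [mul_comm (Real.sqrt (m:ℝ)), abs_div, abs_div, abs_sub_comm]

lemma row_bound (N m : ℕ) (hm : 1 ≤ m) : ∑ n ∈ Finset.Icc 1 N, wker m n ≤ 70 := by
  have hsplit := Finset.sum_filter_add_sum_filter_not (Finset.Icc 1 N)
    (fun n => n ≤ 1200 * m) (wker m)
  have hzero : ∑ n ∈ (Finset.Icc 1 N).filter (fun n => ¬ n ≤ 1200 * m), wker m n = 0 := by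
    apply Finset.sum_eq_zero
    intro n hn
    rw [Finset.mem_filter, Finset.mem_Icc] at hn
    obtain ⟨⟨hn1, _⟩, hn2⟩ := hn
    unfold wker
    rcases eq_or_ne (triR ((Real.log m - Real.log n) / (2 * π))) 0 with h | h
    · rw [h, mul_zero]
    · exact absurd (support_bound hm hn1 h) hn2
  have hle : ∑ n ∈ (Finset.Icc 1 N).filter (fun n => n ≤ 1200 * m), wker m n ≤
      ∑ n ∈ Finset.Icc 1 (1200 * m), (Real.sqrt m * Real.sqrt n)⁻¹ := by
    calc ∑ n ∈ (Finset.Icc 1 N).filter (fun n => n ≤ 1200 * m), wker m n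
        ≤ ∑ n ∈ (Finset.Icc 1 N).filter (fun n => n ≤ 1200 * m),
            (Real.sqrt m * Real.sqrt n)⁻¹ := by
          apply Finset.sum_le_sum
          intro n _
          unfold wker
          calc (Real.sqrt m * Real.sqrt n)⁻¹ * triR _ ≤
              (Real.sqrt m * Real.sqrt n)⁻¹ * 1 := by
                apply mul_le_mul_of_nonneg_left (triR_le_one _) (by positivity)
            _ = (Real.sqrt m * Real.sqrt n)⁻¹ := mul_one _
      _ ≤ ∑ n ∈ Finset.Icc 1 (1200 * m), (Real.sqrt m * Real.sqrt n)⁻¹ := by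
          apply Finset.sum_le_sum_of_subset_of_nonneg
          · intro n hn
            rw [Finset.mem_filter, Finset.mem_Icc] at hn
            rw [Finset.mem_Icc]
            exact ⟨hn.1.1, hn.2⟩
          · intro n _ _
            positivity
  have hrow : ∑ n ∈ Finset.Icc 1 (1200 * m), (Real.sqrt m * Real.sqrt n)⁻¹ ≤ 70 := by
    have e : ∀ n : ℕ, (Real.sqrt m * Real.sqrt n)⁻¹ = (Real.sqrt m)⁻¹ * (Real.sqrt n)⁻¹ :=
      fun n => by rw [mul_inv]
    simp_rw [e, ← Finset.mul_sum]
    have h1 := sum_inv_sqrt (1200 * m)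
    have hmpos : (0:ℝ) < m := by exact_mod_cast hm
    have hsm : (0:ℝ) < Real.sqrt m := Real.sqrt_pos.mpr hmpos
    have h2 : Real.sqrt ((1200 * m : ℕ) : ℝ) = Real.sqrt 1200 * Real.sqrt m := by
      rw [show ((1200 * m : ℕ):ℝ) = 1200 * (m:ℝ) by push_cast; ring,
        Real.sqrt_mul (by norm_num)]
    have h3 : Real.sqrt 1200 ≤ 35 := by
      nlinarith [Real.sq_sqrt (by norm_num : (0:ℝ) ≤ 1200), Real.sqrt_nonneg (1200:ℝ)]
    calc (Real.sqrt m)⁻¹ * ∑ n ∈ Finset.Icc 1 (1200 * m), (Real.sqrt n)⁻¹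
        ≤ (Real.sqrt m)⁻¹ * (2 * (Real.sqrt 1200 * Real.sqrt m)) := by
          apply mul_le_mul_of_nonneg_left _ (by positivity)
          rw [← h2]
          exact h1
      _ = 2 * Real.sqrt 1200 := by field_simp
      _ ≤ 70 := by linarith
  linarith
lemma schur_bound (N : ℕ) (x : ℕ → ℝ) (hx : ∀ n, 0 ≤ x n) :
    ∑ m ∈ Finset.Icc 1 N, ∑ n ∈ Finset.Icc 1 N, x m * x n * wker m n ≤
      70 * ∑ n ∈ Finset.Icc 1 N, x n ^ 2 := by
  have step1 : ∑ m ∈ Finset.Icc 1 N, ∑ n ∈ Finset.Icc 1 N, x m * x n * wker m n ≤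
      ∑ m ∈ Finset.Icc 1 N, ∑ n ∈ Finset.Icc 1 N,
        (x m ^ 2 / 2 * wker m n + x n ^ 2 / 2 * wker m n) := by
    apply Finset.sum_le_sum; intro m _
    apply Finset.sum_le_sum; intro n _
    have := wker_nonneg m n
    nlinarith [sq_nonneg (x m - x n)]
  have step2 : ∀ m ∈ Finset.Icc 1 N,
      ∑ n ∈ Finset.Icc 1 N, x m ^ 2 / 2 * wker m n ≤ x m ^ 2 / 2 * 70 := by
    intro m hm
    rw [Finset.mem_Icc] at hm
    rw [← Finset.mul_sum]
    exact mul_le_mul_of_nonneg_left (row_bound N m hm.1) (by positivity)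
  calc ∑ m ∈ Finset.Icc 1 N, ∑ n ∈ Finset.Icc 1 N, x m * x n * wker m n
      ≤ ∑ m ∈ Finset.Icc 1 N, ∑ n ∈ Finset.Icc 1 N,
          (x m ^ 2 / 2 * wker m n + x n ^ 2 / 2 * wker m n) := step1
    _ = (∑ m ∈ Finset.Icc 1 N, ∑ n ∈ Finset.Icc 1 N, x m ^ 2 / 2 * wker m n)
        + ∑ m ∈ Finset.Icc 1 N, ∑ n ∈ Finset.Icc 1 N, x n ^ 2 / 2 * wker m n := by
        rw [← Finset.sum_add_distrib]
        congr 1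
        funext m
        rw [Finset.sum_add_distrib]
    _ ≤ 70 * ∑ n ∈ Finset.Icc 1 N, x n ^ 2 := by
        have hA : (∑ m ∈ Finset.Icc 1 N, ∑ n ∈ Finset.Icc 1 N, x m ^ 2 / 2 * wker m n)
            ≤ ∑ m ∈ Finset.Icc 1 N, x m ^ 2 / 2 * 70 := Finset.sum_le_sum step2
        have hB : (∑ m ∈ Finset.Icc 1 N, ∑ n ∈ Finset.Icc 1 N, x n ^ 2 / 2 * wker m n)
            ≤ ∑ n ∈ Finset.Icc 1 N, x n ^ 2 / 2 * 70 := by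
          rw [Finset.sum_comm]
          apply Finset.sum_le_sum
          intro n hn
          rw [Finset.mem_Icc] at hn
          rw [← Finset.mul_sum]
          have : ∑ m ∈ Finset.Icc 1 N, wker m n = ∑ m ∈ Finset.Icc 1 N, wker n m := by
            apply Finset.sum_congr rfl; intro m _; rw [wker_symm]
          rw [this]
          exact mul_le_mul_of_nonneg_left (row_bound N n hn.1) (by positivity)
        have : (70:ℝ) * ∑ n ∈ Finset.Icc 1 N, x n ^ 2 =
            (∑ n ∈ Finset.Icc 1 N, x n ^ 2 / 2 * 70) +
            ∑ n ∈ Finset.Icc 1 N, x n ^ 2 / 2 * 70 := by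
          rw [← Finset.sum_add_distrib, Finset.mul_sum]
          congr 1; funext n; ring
        linarith
lemma norm_exp_aux (z : ℂ) (hz : z.re = 0) : ‖Complex.exp z‖ = 1 := by
  rw [Complex.norm_exp, hz, Real.exp_zero]

lemma Tri_eq (x : ℝ) : Tri x = ((triR x : ℝ) : ℂ) := rfl

lemma cpow_eval (k : ℕ) (hk : 1 ≤ k) (t : ℝ) :
    (k : ℂ) ^ (-((1 / 2 : ℂ) + t * I)) =
      (((Real.sqrt k)⁻¹ : ℝ) : ℂ) * Complex.exp (-((t : ℂ) * (Real.log k : ℝ)) * I) := by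
  have hk0 : (0 : ℝ) < k := by exact_mod_cast hk
  have hkC : (k : ℂ) ≠ 0 := by
    simp only [ne_eq, Nat.cast_eq_zero]; omega
  rw [Complex.cpow_def_of_ne_zero hkC]
  have hlog : Complex.log (k : ℂ) = ((Real.log k : ℝ) : ℂ) := by
    rw [show ((k : ℕ) : ℂ) = (((k : ℝ)) : ℂ) by push_cast; rfl, ← Complex.ofReal_log hk0.le]
  rw [hlog]
  have h1 : (Real.sqrt (k:ℝ))⁻¹ = Real.exp (-(Real.log k / 2)) := by
    rw [Real.sqrt_eq_rpow, Real.rpow_def_of_pos hk0, ← Real.exp_neg]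
    ring_nf
  rw [h1, Complex.ofReal_exp, ← Complex.exp_add]
  congr 1
  push_cast
  ring

lemma base_int (μ c : ℝ) :
    Integrable (fun t : ℝ => Complex.exp (-(t * μ) * I) * (fej (t - c) : ℂ)) := by
  apply Integrable.mono' (g := fun t => fej (t - c)) (fej_integrable.comp_sub_right c)
  · apply AEStronglyMeasurable.mul
    · apply Continuous.aestronglyMeasurable
      exact Complex.continuous_exp.comp
        (((Complex.continuous_ofReal.mul continuous_const).neg).mul continuous_const)
    · exact (Complex.measurable_ofReal.comp
        (fej_measurable.comp (measurable_id.sub measurable_const))).aestronglyMeasurable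
  · apply Filter.Eventually.of_forall
    intro t
    rw [norm_mul]
    have h1 : ‖Complex.exp (-((t:ℂ) * μ) * I)‖ = 1 := by
      apply norm_exp_aux
      simp only [Complex.neg_re, Complex.neg_im, Complex.mul_re, Complex.mul_im,
        Complex.I_re, Complex.I_im, Complex.ofReal_re, Complex.ofReal_im]
      ring
    rw [h1, one_mul, Complex.norm_real, Real.norm_eq_abs, _root_.abs_of_nonneg (fej_nonneg _)]

/-- Local embedding for `𝓗²` (stated for finite Dirichlet polynomials): there is an
absolute constant `C` such that for every Dirichlet polynomial `f = ∑_{n=1}^N aₙ n^{-s}`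
and every `θ ∈ ℝ`, `∫_θ^{θ+1} |f(1/2+it)|² dt ≤ C ∑ |aₙ|²`. -/
theorem H2_local_embedding :
    ∃ C : ℝ, ∀ (N : ℕ) (a : ℕ → ℂ) (θ : ℝ),
      (∫ t in θ..(θ + 1),
          ‖∑ n ∈ Finset.Icc 1 N, a n * (n : ℂ) ^ (-((1 / 2 : ℂ) + t * I))‖ ^ 2) ≤
        C * ∑ n ∈ Finset.Icc 1 N, ‖a n‖ ^ 2 := by
  classical
  refine ⟨200, fun N a θ => ?_⟩
  set c : ℝ := θ + 1/2 with hc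
  set F : ℝ → ℂ := fun t => ∑ n ∈ Finset.Icc 1 N,
    a n * ((((Real.sqrt n)⁻¹ : ℝ) : ℂ) * Complex.exp (-((t : ℂ) * (Real.log n : ℝ)) * I)) with hF
  have hstmt : (fun t : ℝ => ‖∑ n ∈ Finset.Icc 1 N, a n * (n : ℂ) ^ (-((1 / 2 : ℂ) + t * I))‖ ^ 2)
      = fun t => ‖F t‖ ^ 2 := by
    funext t
    congr 1
    congr 1
    refine Finset.sum_congr rfl fun n hn => ?_
    rw [cpow_eval n (Finset.mem_Icc.mp hn).1 t]
  have hFcont : Continuous F := by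
    apply continuous_finset_sum
    intro n _
    apply continuous_const.mul
    apply continuous_const.mul
    exact Complex.continuous_exp.comp
      (((Complex.continuous_ofReal.mul continuous_const).neg).mul continuous_const)
  set B : ℝ := ∑ n ∈ Finset.Icc 1 N, ‖a n‖ with hB
  have hFb : ∀ t, ‖F t‖ ≤ B := by
    intro t
    refine (norm_sum_le _ _).trans ?_
    apply Finset.sum_le_sum
    intro n hn
    rw [norm_mul, norm_mul]
    have he : ‖Complex.exp (-((t:ℂ) * (Real.log n : ℝ)) * I)‖ = 1 := by
      apply norm_exp_aux
      simp only [Complex.neg_re, Complex.neg_im, Complex.mul_re, Complex.mul_im,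
        Complex.I_re, Complex.I_im, Complex.ofReal_re, Complex.ofReal_im]
      ring
    rw [he, mul_one]
    have h2 : ‖((((Real.sqrt n)⁻¹ : ℝ)) : ℂ)‖ = (Real.sqrt n)⁻¹ := by
      rw [Complex.norm_real, Real.norm_eq_abs, _root_.abs_of_nonneg (by positivity)]
    rw [h2]
    have hn1 : (1:ℝ) ≤ Real.sqrt n := by
      rw [show (1:ℝ) = Real.sqrt 1 by simp]
      apply Real.sqrt_le_sqrt
      exact_mod_cast (Finset.mem_Icc.mp hn).1
    calc ‖a n‖ * (Real.sqrt n)⁻¹ ≤ ‖a n‖ * 1 := by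
          apply mul_le_mul_of_nonneg_left _ (norm_nonneg _)
          exact inv_le_one_of_one_le₀ hn1
      _ = ‖a n‖ := mul_one _
  set G : ℝ → ℝ := fun t => ‖F t‖ ^ 2 * fej (t - c) with hG
  have hGnn : ∀ t, 0 ≤ G t := fun t => mul_nonneg (by positivity) (fej_nonneg _)
  have hGmeas : AEStronglyMeasurable G volume :=
    (((hFcont.norm.pow 2).measurable).mul
      (fej_measurable.comp (measurable_id.sub measurable_const))).aestronglyMeasurable
  have hGint : Integrable G := by
    apply Integrable.mono' ((fej_integrable.comp_sub_right c).const_mul (B ^ 2)) hGmeas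
    apply Filter.Eventually.of_forall
    intro t
    rw [Real.norm_eq_abs, _root_.abs_of_nonneg (hGnn t)]
    have h2 : ‖F t‖ ^ 2 ≤ B ^ 2 := by nlinarith [norm_nonneg (F t), hFb t]
    exact mul_le_mul_of_nonneg_right h2 (fej_nonneg _)
  -- Step A : pointwise lower bound of Fejer kernel on the interval
  have hA : (∫ t in θ..(θ + 1), ‖F t‖ ^ 2) ≤ π ^ 2 / 4 * ∫ t in θ..(θ + 1), G t := by
    rw [← intervalIntegral.integral_const_mul]
    apply intervalIntegral.integral_mono_on (by linarith)
    · exact ((hFcont.norm.pow 2).intervalIntegrable _ _)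
    · exact (hGint.const_mul _).intervalIntegrable
    · intro t ht
      obtain ⟨ht1, ht2⟩ := ht
      have habs : |t - c| ≤ 1/2 := by
        rw [abs_le, hc]; constructor <;> linarith
      have hlow := fej_lower habs
      have hπ : (0:ℝ) < π := Real.pi_pos
      have h1 : 1 ≤ π ^ 2 / 4 * fej (t - c) := by
        have e : 4 / π ^ 2 * (π ^ 2 / 4) = 1 := by field_simp
        nlinarith [fej_nonneg (t - c)]
      calc ‖F t‖ ^ 2 = ‖F t‖ ^ 2 * 1 := (mul_one _).symm
        _ ≤ ‖F t‖ ^ 2 * (π ^ 2 / 4 * fej (t - c)) := by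
            apply mul_le_mul_of_nonneg_left h1 (by positivity)
        _ = π ^ 2 / 4 * G t := by rw [hG]; ring
  -- Step B : extend to the whole line
  have hB2 : (∫ t in θ..(θ + 1), G t) ≤ ∫ t : ℝ, G t := by
    rw [intervalIntegral.integral_of_le (by linarith)]
    exact setIntegral_le_integral hGint (Filter.Eventually.of_forall fun t => hGnn t)
  -- expansion into a double sum
  set L : ℕ → ℝ := fun n => Real.log n with hL
  set T : ℕ → ℕ → ℝ → ℂ := fun m n t =>
    (a m * ((((Real.sqrt m)⁻¹ : ℝ) : ℂ) * Complex.exp (-((t : ℂ) * (L m : ℝ)) * I))) *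
    (starRingEnd ℂ) (a n * ((((Real.sqrt n)⁻¹ : ℝ) : ℂ) * Complex.exp (-((t : ℂ) * (L n : ℝ)) * I))) *
    ((fej (t - c) : ℝ) : ℂ) with hT
  have hTsimp : ∀ m n t, T m n t =
      (a m * (starRingEnd ℂ) (a n) * (((Real.sqrt m)⁻¹ * (Real.sqrt n)⁻¹ : ℝ) : ℂ)) *
      (Complex.exp (-((t : ℂ) * ((L m - L n : ℝ) : ℂ)) * I) * ((fej (t - c) : ℝ) : ℂ)) := by
    intro m n t
    simp only [hT]
    have hconj : (starRingEnd ℂ) (a n * ((((Real.sqrt n)⁻¹ : ℝ) : ℂ)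
        * Complex.exp (-((t : ℂ) * (L n : ℝ)) * I)))
        = (starRingEnd ℂ) (a n) * ((((Real.sqrt n)⁻¹ : ℝ) : ℂ)
          * Complex.exp (((t : ℂ) * (L n : ℝ)) * I)) := by
      rw [map_mul, map_mul, Complex.conj_ofReal, ← Complex.exp_conj]
      congr 2
      simp [map_mul, Complex.conj_ofReal, Complex.conj_I]
    rw [hconj]
    have hE : Complex.exp (-((t : ℂ) * (L m : ℝ)) * I) * Complex.exp (((t : ℂ) * (L n : ℝ)) * I)
        = Complex.exp (-((t : ℂ) * ((L m - L n : ℝ) : ℂ)) * I) := by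
      rw [← Complex.exp_add]
      congr 1
      push_cast
      ring
    rw [← hE]
    push_cast
    ring
  have hTint : ∀ m n, Integrable (T m n) := by
    intro m n
    have : T m n = fun (t : ℝ) =>
        (a m * (starRingEnd ℂ) (a n) * (((Real.sqrt m)⁻¹ * (Real.sqrt n)⁻¹ : ℝ) : ℂ)) *
        (Complex.exp (-((t : ℂ) * ((L m - L n : ℝ) : ℂ)) * I) * ((fej (t - c) : ℝ) : ℂ)) :=
      funext fun t => hTsimp m n t
    rw [this]
    exact (base_int (L m - L n) c).const_mul _
  have hTval : ∀ m n, (∫ t : ℝ, T m n t) =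
      (a m * (starRingEnd ℂ) (a n) * (((Real.sqrt m)⁻¹ * (Real.sqrt n)⁻¹ : ℝ) : ℂ)) *
      (Complex.exp (-((c : ℂ) * ((L m - L n : ℝ) : ℂ)) * I) * Tri ((L m - L n) / (2 * π))) := by
    intro m n
    simp_rw [hTsimp m n]
    rw [integral_const_mul, key_integral (L m - L n) c]
  have hTnorm : ∀ m n, ‖∫ t : ℝ, T m n t‖ ≤ ‖a m‖ * ‖a n‖ * wker m n := by
    intro m n
    rw [hTval m n]
    rw [norm_mul, norm_mul, norm_mul, norm_mul]
    have h1 : ‖(starRingEnd ℂ) (a n)‖ = ‖a n‖ := RCLike.norm_conj _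
    have h2 : ‖((((Real.sqrt m)⁻¹ * (Real.sqrt n)⁻¹ : ℝ)) : ℂ)‖
        = (Real.sqrt m)⁻¹ * (Real.sqrt n)⁻¹ := by
      rw [Complex.norm_real, Real.norm_eq_abs, _root_.abs_of_nonneg (by positivity)]
    have h3 : ‖Complex.exp (-((c : ℂ) * ((L m - L n : ℝ) : ℂ)) * I)‖ = 1 := by
      apply norm_exp_aux
      simp only [Complex.neg_re, Complex.neg_im, Complex.mul_re, Complex.mul_im,
        Complex.I_re, Complex.I_im, Complex.ofReal_re, Complex.ofReal_im]
      ring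
    have h4 : ‖Tri ((L m - L n) / (2 * π))‖ = triR ((L m - L n) / (2 * π)) := by
      rw [Tri_eq, Complex.norm_real, Real.norm_eq_abs, _root_.abs_of_nonneg (triR_nonneg _)]
    rw [h1, h2, h3, h4, one_mul]
    unfold wker
    rw [mul_inv]
    exact le_of_eq (by rw [hL]; ring)
  have hexpand : ∀ t, G t = (∑ m ∈ Finset.Icc 1 N, ∑ n ∈ Finset.Icc 1 N, T m n t).re := by
    intro t
    have h1 : (∑ m ∈ Finset.Icc 1 N, ∑ n ∈ Finset.Icc 1 N, T m n t)
        = (F t * (starRingEnd ℂ) (F t)) * ((fej (t - c) : ℝ) : ℂ) := by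
      rw [hF, hT]
      rw [map_sum, Finset.sum_mul_sum]
      rw [Finset.sum_mul]
      refine Finset.sum_congr rfl fun m _ => ?_
      rw [Finset.sum_mul]
    have h2 : ‖F t‖ ^ 2 = Complex.normSq (F t) := by
      rw [Complex.normSq_eq_norm_sq]
    simp only [hG]
    rw [h1, Complex.mul_conj, ← Complex.ofReal_mul, Complex.ofReal_re, h2]
  have hC : (∫ t : ℝ, G t) ≤
      ∑ m ∈ Finset.Icc 1 N, ∑ n ∈ Finset.Icc 1 N, ‖a m‖ * ‖a n‖ * wker m n := by
    have hint : Integrable (fun t => ∑ m ∈ Finset.Icc 1 N, ∑ n ∈ Finset.Icc 1 N, T m n t) :=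
      integrable_finset_sum _ fun m _ => integrable_finset_sum _ fun n _ => hTint m n
    have hre := Complex.reCLM.integral_comp_comm hint
    simp only [Complex.reCLM_apply] at hre
    have h1 : (∫ t : ℝ, G t)
        = (∫ t : ℝ, ∑ m ∈ Finset.Icc 1 N, ∑ n ∈ Finset.Icc 1 N, T m n t).re := by
      simp_rw [hexpand]
      exact hre
    have h2 : (∫ t : ℝ, ∑ m ∈ Finset.Icc 1 N, ∑ n ∈ Finset.Icc 1 N, T m n t)
        = ∑ m ∈ Finset.Icc 1 N, ∑ n ∈ Finset.Icc 1 N, ∫ t : ℝ, T m n t := by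
      rw [integral_finset_sum _ fun m _ => integrable_finset_sum _ fun n _ => hTint m n]
      exact Finset.sum_congr rfl fun m _ => integral_finset_sum _ fun n _ => hTint m n
    rw [h1, h2, Complex.re_sum]
    calc ∑ m ∈ Finset.Icc 1 N, (∑ n ∈ Finset.Icc 1 N, ∫ t : ℝ, T m n t).re
        = ∑ m ∈ Finset.Icc 1 N, ∑ n ∈ Finset.Icc 1 N, (∫ t : ℝ, T m n t).re := by
          exact Finset.sum_congr rfl fun m _ => Complex.re_sum _ _
      _ ≤ ∑ m ∈ Finset.Icc 1 N, ∑ n ∈ Finset.Icc 1 N, ‖a m‖ * ‖a n‖ * wker m n := by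
          apply Finset.sum_le_sum
          intro m _
          apply Finset.sum_le_sum
          intro n _
          calc (∫ t : ℝ, T m n t).re ≤ ‖∫ t : ℝ, T m n t‖ := Complex.re_le_norm _
            _ ≤ ‖a m‖ * ‖a n‖ * wker m n := hTnorm m n
  have hSchur : ∑ m ∈ Finset.Icc 1 N, ∑ n ∈ Finset.Icc 1 N, ‖a m‖ * ‖a n‖ * wker m n ≤
      70 * ∑ n ∈ Finset.Icc 1 N, ‖a n‖ ^ 2 := by
    have := schur_bound N (fun n => ‖a n‖) (fun n => norm_nonneg _)
    simpa using this
  have hsum_nn : (0:ℝ) ≤ ∑ n ∈ Finset.Icc 1 N, ‖a n‖ ^ 2 := by positivity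
  have hπlt : π < 3.15 := Real.pi_lt_d2
  have hπ0 : (0:ℝ) < π := Real.pi_pos
  calc (∫ t in θ..(θ + 1),
          ‖∑ n ∈ Finset.Icc 1 N, a n * (n : ℂ) ^ (-((1 / 2 : ℂ) + t * I))‖ ^ 2)
      = ∫ t in θ..(θ + 1), ‖F t‖ ^ 2 := by rw [hstmt]
    _ ≤ π ^ 2 / 4 * ∫ t in θ..(θ + 1), G t := hA
    _ ≤ π ^ 2 / 4 * ∫ t : ℝ, G t := by
        apply mul_le_mul_of_nonneg_left hB2 (by positivity)
    _ ≤ π ^ 2 / 4 * ∑ m ∈ Finset.Icc 1 N, ∑ n ∈ Finset.Icc 1 N, ‖a m‖ * ‖a n‖ * wker m n := by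
        apply mul_le_mul_of_nonneg_left hC (by positivity)
    _ ≤ π ^ 2 / 4 * (70 * ∑ n ∈ Finset.Icc 1 N, ‖a n‖ ^ 2) := by
        apply mul_le_mul_of_nonneg_left hSchur (by positivity)
    _ ≤ 200 * ∑ n ∈ Finset.Icc 1 N, ‖a n‖ ^ 2 := by
        have hπ2 : π ^ 2 ≤ 9.9225 := by nlinarith
        nlinarith [mul_le_mul_of_nonneg_right hπ2 hsum_nn]
end

section
/- Let p = 2k for a positive integer k. Then there is a constant C_p such that for every finite Dirichlet polynomial f, ∫_0^1 |f(1/2 + it)|^p dt ≤ C_p ‖f‖^p_{𝓗^p}, where ‖f‖_{𝓗^p}^p = lim_{T→∞} (1/(2T)) ∫_{-T}^T |f(it)|^p dt. -/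
open MeasureTheory Filter Complex Real

lemma prod_natCast_cpow {ι : Type*} (s : ℂ) (T : Finset ι) (v : ι → ℕ) :
    ((∏ i ∈ T, v i : ℕ) : ℂ) ^ s = ∏ i ∈ T, ((v i : ℕ) : ℂ) ^ s := by
  induction T using Finset.cons_induction with
  | empty => simp
  | cons i T hi ih =>
      rw [Finset.prod_cons, Finset.prod_cons, Nat.cast_mul,
        Complex.natCast_mul_natCast_cpow, ih]

lemma dirichlet_pow (k N : ℕ) (a : ℕ → ℂ) (s : ℂ) :
    (∑ n ∈ Finset.Icc 1 N, a n * (n : ℂ) ^ s) ^ k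
      = ∑ q ∈ Finset.Icc 1 (N ^ k),
          (∑ v ∈ (Fintype.piFinset fun _ : Fin k => Finset.Icc 1 N).filter
              (fun v => ∏ i, v i = q), ∏ i, a (v i)) * (q : ℂ) ^ s := by
  have h1 : (∑ n ∈ Finset.Icc 1 N, a n * (n : ℂ) ^ s) ^ k
      = ∑ v ∈ (Fintype.piFinset fun _ : Fin k => Finset.Icc 1 N),
          (∏ i, a (v i)) * ((∏ i, v i : ℕ) : ℂ) ^ s := by
    rw [← Fin.prod_const k, Finset.prod_univ_sum]
    refine Finset.sum_congr rfl fun v _ => ?_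
    rw [Finset.prod_mul_distrib, prod_natCast_cpow]
  rw [h1]
  rw [← Finset.sum_fiberwise_of_maps_to (g := fun v : Fin k → ℕ => ∏ i, v i)
      (t := Finset.Icc 1 (N ^ k)) ?_ _]
  · refine Finset.sum_congr rfl fun q _ => ?_
    rw [Finset.sum_mul]
    refine Finset.sum_congr rfl fun v hv => ?_
    rw [(Finset.mem_filter.mp hv).2]
  · intro v hv
    rw [Fintype.mem_piFinset] at hv
    simp only [Finset.mem_Icc]
    constructor
    · exact Nat.one_le_iff_ne_zero.mpr (Finset.prod_ne_zero_iff.mpr fun i _ =>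
        Nat.one_le_iff_ne_zero.mp (Finset.mem_Icc.mp (hv i)).1)
    · calc ∏ i, v i ≤ ∏ _i : Fin k, N :=
            Finset.prod_le_prod' fun i _ => (Finset.mem_Icc.mp (hv i)).2
        _ = N ^ k := by simp [Finset.prod_const]

lemma cpow_neg_mul_I (q : ℕ) (hq : 1 ≤ q) (t : ℝ) :
    (q : ℂ) ^ (-((t : ℂ) * I)) = Complex.exp (↑(-Real.log q * t) * I) := by
  have hq0 : (0:ℝ) < q := by exact_mod_cast hq
  have hne : (q : ℂ) ≠ 0 := Nat.cast_ne_zero.mpr (by omega)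
  rw [Complex.cpow_def_of_ne_zero hne]
  congr 1
  have hlog : Complex.log (q : ℂ) = (Real.log q : ℂ) := by
    rw [show ((q:ℂ)) = ((q:ℝ):ℂ) by push_cast; ring, Complex.ofReal_log hq0.le]
  rw [hlog]
  push_cast
  ring

lemma cpow_neg_half_add (q : ℕ) (hq : 1 ≤ q) (t : ℝ) :
    (q : ℂ) ^ (-((1/2 : ℂ) + (t : ℂ) * I))
      = (q : ℂ) ^ (-(1/2 : ℂ)) * Complex.exp (↑(-Real.log q * t) * I) := by
  have hne : (q : ℂ) ≠ 0 := Nat.cast_ne_zero.mpr (by omega)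
  rw [show (-((1/2 : ℂ) + (t : ℂ) * I)) = (-(1/2:ℂ)) + (-((t:ℂ) * I)) by ring,
    Complex.cpow_add _ _ hne, cpow_neg_mul_I q hq t]

-- norm squared of exponential sum
lemma normsq_sum (E : Finset ℕ) (c : ℕ → ℂ) (lam : ℕ → ℝ) (t : ℝ) :
    ‖∑ q ∈ E, c q * Complex.exp (↑(lam q * t) * I)‖ ^ 2
      = ∑ q ∈ E, ∑ r ∈ E,
          ((c q * (starRingEnd ℂ) (c r)) * Complex.exp (↑((lam q - lam r) * t) * I)).re := by
  set S := ∑ q ∈ E, c q * Complex.exp (↑(lam q * t) * I) with hS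
  have h1 : ‖S‖ ^ 2 = (S * (starRingEnd ℂ) S).re := by
    rw [Complex.mul_conj]; simp [Complex.sq_norm]
  rw [h1, hS, map_sum, Finset.sum_mul_sum, Complex.re_sum _ fun i =>
    ∑ j ∈ E, c i * Complex.exp (↑(lam i * t) * I) * (starRingEnd ℂ) (c j * Complex.exp (↑(lam j * t) * I))]
  refine Finset.sum_congr rfl fun q _ => ?_
  rw [Complex.re_sum]
  refine Finset.sum_congr rfl fun r _ => ?_
  congr 1
  rw [map_mul]
  have hconj : (starRingEnd ℂ) (Complex.exp (↑(lam r * t) * I))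
      = Complex.exp (↑(-(lam r * t)) * I) := by
    rw [← Complex.exp_conj]
    congr 1
    rw [map_mul, Complex.conj_ofReal, Complex.conj_I]
    push_cast
    ring
  rw [hconj, mul_mul_mul_comm, ← Complex.exp_add]
  congr 2
  push_cast
  ring

lemma cont_re_exp (z : ℂ) (θ : ℝ) :
    Continuous fun t : ℝ => (z * Complex.exp (↑(θ * t) * I)).re :=
  Complex.continuous_re.comp <| continuous_const.mul <| Complex.continuous_exp.comp <|
    (Complex.continuous_ofReal.comp (continuous_const.mul continuous_id)).mul continuous_const

lemma J_int (z : ℂ) (θ T : ℝ) :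
    (∫ t in (-T)..T, (z * Complex.exp (↑(θ * t) * I)).re)
      = z.re * (if θ = 0 then 2*T else 2*Real.sin (θ*T)/θ) := by
  have h : ∀ t : ℝ, (z * Complex.exp (↑(θ*t) * I)).re
      = z.re * Real.cos (θ*t) - z.im * Real.sin (θ*t) := fun t => by
    rw [Complex.mul_re, Complex.exp_ofReal_mul_I_re, Complex.exp_ofReal_mul_I_im]
  rw [intervalIntegral.integral_congr (g := fun t => z.re * Real.cos (θ*t) - z.im * Real.sin (θ*t))
    (fun t _ => h t)]
  rw [intervalIntegral.integral_sub, intervalIntegral.integral_const_mul,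
    intervalIntegral.integral_const_mul]
  · by_cases hθ : θ = 0
    · subst hθ
      simp
      left; ring
    · rw [if_neg hθ]
      rw [intervalIntegral.integral_comp_mul_left Real.cos hθ,
        intervalIntegral.integral_comp_mul_left Real.sin hθ]
      rw [integral_cos, integral_sin]
      have e1 : θ * -T = -(θ*T) := by ring
      rw [e1, Real.sin_neg, Real.cos_neg]
      simp only [smul_eq_mul]
      rw [div_eq_mul_inv]
      ring
  · exact (Continuous.mul continuous_const
      (Real.continuous_cos.comp (continuous_const.mul continuous_id))).intervalIntegrable _ _
  · exact (Continuous.mul continuous_const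
      (Real.continuous_sin.comp (continuous_const.mul continuous_id))).intervalIntegrable _ _

lemma abs_sin_le_one' (x : ℝ) : |Real.sin x| ≤ 1 :=
  abs_le.mpr ⟨Real.neg_one_le_sin x, Real.sin_le_one x⟩

set_option maxHeartbeats 1000000 in
lemma meanValue (E : Finset ℕ) (hE : ∀ q ∈ E, 1 ≤ q) (b : ℕ → ℂ) :
    Tendsto (fun T : ℝ => (1 / (2 * T)) *
        ∫ t in (-T)..T, ‖∑ q ∈ E, b q * (q : ℂ) ^ (-((t : ℂ) * I))‖ ^ 2)
      atTop (nhds (∑ q ∈ E, ‖b q‖ ^ 2)) := by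
  set lam : ℕ → ℝ := fun q => -Real.log q with hlam
  have hint : ∀ T : ℝ, (∫ t in (-T)..T, ‖∑ q ∈ E, b q * (q:ℂ)^(-((t:ℂ)*I))‖^2)
      = ∑ q ∈ E, ∑ r ∈ E, (b q * (starRingEnd ℂ) (b r)).re *
          (if lam q - lam r = 0 then 2*T
           else 2*Real.sin ((lam q - lam r)*T)/(lam q - lam r)) := by
    intro T
    have h1 : Set.EqOn (fun t : ℝ => ‖∑ q ∈ E, b q * (q:ℂ)^(-((t:ℂ)*I))‖^2)
        (fun t => ∑ q ∈ E, ∑ r ∈ E,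
          ((b q * (starRingEnd ℂ) (b r)) * Complex.exp (↑((lam q - lam r)*t)*I)).re)
        (Set.uIcc (-T) T) := fun t _ => by
      dsimp only
      rw [show ∑ q ∈ E, b q * (q:ℂ)^(-((t:ℂ)*I))
            = ∑ q ∈ E, b q * Complex.exp (↑(lam q * t)*I) from
          Finset.sum_congr rfl (fun q hq => by rw [cpow_neg_mul_I q (hE q hq) t]),
        normsq_sum]
    calc (∫ t in (-T)..T, ‖∑ q ∈ E, b q * (q:ℂ)^(-((t:ℂ)*I))‖^2)
        = ∫ t in (-T)..T, ∑ q ∈ E, ∑ r ∈ E,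
            ((b q * (starRingEnd ℂ) (b r)) * Complex.exp (↑((lam q - lam r)*t)*I)).re :=
          intervalIntegral.integral_congr h1
      _ = ∑ q ∈ E, ∫ t in (-T)..T, ∑ r ∈ E,
            ((b q * (starRingEnd ℂ) (b r)) * Complex.exp (↑((lam q - lam r)*t)*I)).re :=
          intervalIntegral.integral_finset_sum (fun q _ =>
            (continuous_finset_sum E (fun r _ => cont_re_exp _ _)).intervalIntegrable _ _)
      _ = ∑ q ∈ E, ∑ r ∈ E, ∫ t in (-T)..T,
            ((b q * (starRingEnd ℂ) (b r)) * Complex.exp (↑((lam q - lam r)*t)*I)).re :=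
          Finset.sum_congr rfl fun q _ => intervalIntegral.integral_finset_sum
            (fun r _ => (cont_re_exp _ _).intervalIntegrable _ _)
      _ = ∑ q ∈ E, ∑ r ∈ E, (b q * (starRingEnd ℂ) (b r)).re *
            (if lam q - lam r = 0 then 2*T
             else 2*Real.sin ((lam q - lam r)*T)/(lam q - lam r)) :=
          Finset.sum_congr rfl fun q _ => Finset.sum_congr rfl fun r _ => J_int _ _ T
  have hfun : ∀ T : ℝ, (1 / (2 * T)) *
      (∫ t in (-T)..T, ‖∑ q ∈ E, b q * (q:ℂ)^(-((t:ℂ)*I))‖^2)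
      = ∑ q ∈ E, ∑ r ∈ E, (1 / (2 * T)) * ((b q * (starRingEnd ℂ) (b r)).re *
          (if lam q - lam r = 0 then 2*T
           else 2*Real.sin ((lam q - lam r)*T)/(lam q - lam r))) := by
    intro T
    rw [hint T, Finset.mul_sum]
    exact Finset.sum_congr rfl fun q _ => Finset.mul_sum _ _ _
  have hsum : (∑ q ∈ E, ‖b q‖ ^ 2)
      = ∑ q ∈ E, ∑ r ∈ E, (if q = r then ‖b q‖^2 else 0) := by
    refine Finset.sum_congr rfl fun q hq => ?_
    rw [Finset.sum_ite_eq E q (fun _ => ‖b q‖^2), if_pos hq]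
  rw [hsum]
  refine Tendsto.congr (fun T => (hfun T).symm) ?_
  refine tendsto_finset_sum _ fun q hq => tendsto_finset_sum _ fun r hr => ?_
  by_cases hqr : q = r
  · subst hqr
    rw [if_pos rfl]
    have hz : (b q * (starRingEnd ℂ) (b q)).re = ‖b q‖^2 := by
      rw [Complex.mul_conj]
      simp [Complex.normSq_eq_norm_sq, ← Complex.ofReal_pow]
    have hev : ∀ᶠ T : ℝ in atTop, ‖b q‖^2 = (1 / (2*T)) * ((b q * (starRingEnd ℂ) (b q)).re *
        (if lam q - lam q = 0 then 2*T else 2*Real.sin ((lam q - lam q)*T)/(lam q - lam q))) := by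
      filter_upwards [eventually_ge_atTop (1:ℝ)] with T hT
      rw [if_pos (by ring), hz]
      have hT0 : T ≠ 0 := by linarith
      field_simp
    exact Tendsto.congr' hev tendsto_const_nhds
  · rw [if_neg hqr]
    have hθ : lam q - lam r ≠ 0 := by
      have hq1 : (0:ℝ) < q := by exact_mod_cast hE q hq
      have hr1 : (0:ℝ) < r := by exact_mod_cast hE r hr
      simp only [hlam]
      intro hcon
      have hlog : Real.log q = Real.log r := by linarith [sub_eq_zero.mp hcon]
      exact hqr (by exact_mod_cast Real.exp_log hq1 ▸ Real.exp_log hr1 ▸ congrArg Real.exp hlog)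
    set θ := lam q - lam r
    set c := (b q * (starRingEnd ℂ) (b r)).re with hc
    have hbound : ∀ᶠ T : ℝ in atTop,
        ‖(1 / (2*T)) * (c * (if θ = 0 then 2*T else 2*Real.sin (θ*T)/θ))‖
          ≤ (|c| * (2/|θ|)) * (1/(2*T)) := by
      filter_upwards [eventually_ge_atTop (1:ℝ)] with T hT
      rw [if_neg hθ]
      have hT0 : (0:ℝ) < T := by linarith
      rw [Real.norm_eq_abs, abs_mul, abs_of_pos (by positivity : (0:ℝ) < 1/(2*T)),
        mul_comm (1/(2*T)) _]
      gcongr ?_ * (1/(2*T))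
      calc |c * (2*Real.sin (θ*T)/θ)| = |c| * (2*|Real.sin (θ*T)|/|θ|) := by
            rw [abs_mul, abs_div, abs_mul, _root_.abs_two]
        _ ≤ |c| * (2*1/|θ|) := by gcongr; exact abs_sin_le_one' _
        _ = |c| * (2/|θ|) := by norm_num
    refine squeeze_zero_norm' hbound ?_
    have h2T : Tendsto (fun T : ℝ => 1/(2*T)) atTop (nhds 0) := by
      have : Tendsto (fun T : ℝ => 2*T) atTop atTop :=
        Tendsto.const_mul_atTop (by norm_num) tendsto_id
      have h0 := this.inv_tendsto_atTop
      simp only [Pi.inv_def] at h0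
      simpa [one_div] using h0
    simpa using h2T.const_mul (|c| * (2/|θ|))

noncomputable def W (q r : ℕ) : ℝ :=
  Real.exp (-(Real.log q - Real.log r)^2/4) / (Real.sqrt q * Real.sqrt r)

lemma W_nonneg (q r : ℕ) : 0 ≤ W q r := by
  unfold W; positivity

lemma W_symm (q r : ℕ) : W q r = W r q := by
  unfold W
  rw [mul_comm]
  congr 2
  ring

lemma W_le (q r : ℕ) (hq : 1 ≤ q) (hr : 1 ≤ r) (hrq : r ≤ q) :
    W q r ≤ Real.exp 1 * (Real.sqrt r / (q * Real.sqrt q)) := by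
  have hq0 : (0:ℝ) < q := by exact_mod_cast hq
  have hr0 : (0:ℝ) < r := by exact_mod_cast hr
  have h1 : Real.exp (-(Real.log q - Real.log r)^2/4) ≤ Real.exp 1 * ((r:ℝ)/q) := by
    have e1 : Real.exp (-(Real.log q - Real.log r)^2/4)
        ≤ Real.exp (1 - (Real.log q - Real.log r)) := by
      apply Real.exp_le_exp.mpr
      nlinarith [sq_nonneg (Real.log q - Real.log r - 2)]
    have e2 : Real.exp (1 - (Real.log q - Real.log r)) = Real.exp 1 * ((r:ℝ)/q) := by
      rw [Real.exp_sub, Real.exp_sub, Real.exp_log hq0, Real.exp_log hr0]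
      field_simp
    linarith
  have ha : (0:ℝ) < Real.sqrt q := Real.sqrt_pos.mpr hq0
  have hb : (0:ℝ) < Real.sqrt r := Real.sqrt_pos.mpr hr0
  have hq' : Real.sqrt q * Real.sqrt q = (q:ℝ) := Real.mul_self_sqrt hq0.le
  have hr' : Real.sqrt r * Real.sqrt r = (r:ℝ) := Real.mul_self_sqrt hr0.le
  unfold W
  set A := Real.sqrt (q:ℝ) with hA
  set B := Real.sqrt (r:ℝ) with hB
  rw [div_le_iff₀ (by positivity)]
  calc Real.exp (-(Real.log q - Real.log r)^2/4) ≤ Real.exp 1 * ((r:ℝ)/q) := h1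
    _ = Real.exp 1 * (B / ((q:ℝ) * A)) * (A * B) := by
        rw [← hq', ← hr']
        field_simp

lemma term_telescope (r : ℕ) (hr : 2 ≤ r) :
    1/((r:ℝ) * Real.sqrt r) ≤ 2/Real.sqrt (r-1 : ℕ) - 2/Real.sqrt r := by
  have h1 : (1:ℝ) ≤ (r:ℝ) - 1 := by
    have : (2:ℝ) ≤ r := by exact_mod_cast hr
    linarith
  have hcast : ((r-1 : ℕ) : ℝ) = (r:ℝ) - 1 := by
    have : 1 ≤ r := by omega
    push_cast [this]
    ring
  rw [hcast]
  set a := Real.sqrt ((r:ℝ) - 1) with ha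
  set b := Real.sqrt (r:ℝ) with hb
  have ha0 : (0:ℝ) < a := Real.sqrt_pos.mpr (by linarith)
  have hb0 : (0:ℝ) < b := Real.sqrt_pos.mpr (by linarith)
  have ha2 : a * a = (r:ℝ) - 1 := Real.mul_self_sqrt (by linarith)
  have hb2 : b * b = (r:ℝ) := Real.mul_self_sqrt (by linarith)
  have hab : a ≤ b := Real.sqrt_le_sqrt (by linarith)
  rw [div_sub_div _ _ ha0.ne' hb0.ne', div_le_div_iff₀ (by positivity) (by positivity)]
  have key : (b - a) * (b + a) = 1 := by nlinarith
  nlinarith [mul_pos ha0 hb0, mul_pos (mul_pos ha0 hb0) hb0, sq_nonneg (b-a),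
    mul_le_mul_of_nonneg_right hab (le_of_lt (mul_pos hb0 hb0))]

lemma sum_Ioc_telescope (q L : ℕ) (hq : 1 ≤ q) :
    ∑ r ∈ Finset.Ioc q L, 1/((r:ℝ) * Real.sqrt r) ≤ 2/Real.sqrt q := by
  have g_nonneg : ∀ n : ℕ, 0 ≤ 2/Real.sqrt (n:ℝ) := fun n => by positivity
  calc ∑ r ∈ Finset.Ioc q L, 1/((r:ℝ) * Real.sqrt r)
      ≤ ∑ r ∈ Finset.Ioc q L, (2/Real.sqrt ((r-1 : ℕ):ℝ) - 2/Real.sqrt (r:ℝ)) := by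
        apply Finset.sum_le_sum
        intro r hrm
        have : q < r := (Finset.mem_Ioc.mp hrm).1
        exact term_telescope r (by omega)
    _ ≤ 2/Real.sqrt q := by
        rcases le_or_gt L q with hLq | hqL
        · rw [Finset.Ioc_eq_empty (by omega)]
          simp [g_nonneg q]
        · have hIoc : Finset.Ioc q L = Finset.Ico (q+1) (L+1) := by
            ext x; simp only [Finset.mem_Ioc, Finset.mem_Ico]; omega
          rw [hIoc, Finset.sum_Ico_eq_sum_range]
          have hre : ∀ i : ℕ, (2/Real.sqrt ((q+1+i-1 : ℕ):ℝ) - 2/Real.sqrt ((q+1+i : ℕ):ℝ))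
              = (fun j => 2/Real.sqrt ((q+j : ℕ):ℝ)) i - (fun j => 2/Real.sqrt ((q+j : ℕ):ℝ)) (i+1) := by
            intro i
            have e1 : q+1+i-1 = q+i := by omega
            have e2 : q+1+i = q+(i+1) := by omega
            rw [e1, e2]
          rw [Finset.sum_congr rfl (fun i _ => hre i), Finset.sum_range_sub']
          have h0 : 0 ≤ 2/Real.sqrt ((q + (L+1-(q+1)) : ℕ):ℝ) := g_nonneg _
          simp only [Nat.add_zero]
          linarith

lemma row_bound_s14 (E : Finset ℕ) (hE : ∀ q ∈ E, 1 ≤ q) (q : ℕ) (hq : q ∈ E) :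
    ∑ r ∈ E, W q r ≤ 3 * Real.exp 1 := by
  have hq1 : 1 ≤ q := hE q hq
  have hq0 : (0:ℝ) < q := by exact_mod_cast hq1
  set L := E.sup id with hL
  have step1 : ∑ r ∈ E, W q r ≤ ∑ r ∈ E,
      Real.exp 1 * (if r ≤ q then Real.sqrt r / (q * Real.sqrt q)
        else Real.sqrt q / (r * Real.sqrt r)) := by
    apply Finset.sum_le_sum
    intro r hr
    by_cases hrq : r ≤ q
    · rw [if_pos hrq]; exact W_le q r hq1 (hE r hr) hrq
    · rw [if_neg hrq, W_symm]
      exact W_le r q (hE r hr) hq1 (by omega)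
  have step2 : ∑ r ∈ E, Real.exp 1 * (if r ≤ q then Real.sqrt r / (q * Real.sqrt q)
      else Real.sqrt q / (r * Real.sqrt r)) = Real.exp 1 *
      ((∑ r ∈ E.filter (fun r => r ≤ q), Real.sqrt r / (q * Real.sqrt q))
        + (∑ r ∈ E.filter (fun r => ¬ r ≤ q), Real.sqrt q / (r * Real.sqrt r))) := by
    rw [← Finset.mul_sum, ← Finset.sum_filter_add_sum_filter_not E (fun r => r ≤ q)]
    congr 1
    · refine congrArg₂ _ ?_ ?_
      · exact Finset.sum_congr rfl fun r hr => if_pos (Finset.mem_filter.mp hr).2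
      · exact Finset.sum_congr rfl fun r hr => if_neg (Finset.mem_filter.mp hr).2
  have part1 : (∑ r ∈ E.filter (fun r => r ≤ q), Real.sqrt r / (q * Real.sqrt q)) ≤ 1 := by
    have hsub : E.filter (fun r => r ≤ q) ⊆ Finset.Icc 1 q := by
      intro r hr
      rw [Finset.mem_Icc]
      exact ⟨hE r (Finset.mem_filter.mp hr).1, (Finset.mem_filter.mp hr).2⟩
    have hcard : (E.filter (fun r => r ≤ q)).card ≤ q := by
      have := Finset.card_le_card hsub
      rwa [Nat.card_Icc, Nat.add_sub_cancel] at this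
    calc (∑ r ∈ E.filter (fun r => r ≤ q), Real.sqrt r / (q * Real.sqrt q))
        ≤ ∑ _r ∈ E.filter (fun r => r ≤ q), 1/(q:ℝ) := by
          apply Finset.sum_le_sum
          intro r hr
          have hrq : r ≤ q := (Finset.mem_filter.mp hr).2
          have h1 : Real.sqrt r ≤ Real.sqrt q := Real.sqrt_le_sqrt (by exact_mod_cast hrq)
          have hq'' : Real.sqrt q / (q * Real.sqrt q) = 1/(q:ℝ) := by
            rw [div_eq_div_iff (by positivity) (by positivity)]
            ring
          rw [← hq'']
          gcongr
      _ = (E.filter (fun r => r ≤ q)).card * (1/(q:ℝ)) := by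
          rw [Finset.sum_const, nsmul_eq_mul]
      _ ≤ q * (1/(q:ℝ)) := by
          have hc : ((E.filter (fun r => r ≤ q)).card : ℝ) ≤ (q:ℝ) := by exact_mod_cast hcard
          have h1q : (0:ℝ) ≤ 1/(q:ℝ) := by positivity
          exact mul_le_mul_of_nonneg_right hc h1q
      _ = 1 := by field_simp
  have part2 : (∑ r ∈ E.filter (fun r => ¬ r ≤ q), Real.sqrt q / (r * Real.sqrt r)) ≤ 2 := by
    have hsub : E.filter (fun r => ¬ r ≤ q) ⊆ Finset.Ioc q L := by
      intro r hr
      rw [Finset.mem_Ioc]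
      constructor
      · have := (Finset.mem_filter.mp hr).2; omega
      · exact Finset.le_sup (f := id) (Finset.mem_filter.mp hr).1
    calc (∑ r ∈ E.filter (fun r => ¬ r ≤ q), Real.sqrt q / (r * Real.sqrt r))
        = Real.sqrt q * (∑ r ∈ E.filter (fun r => ¬ r ≤ q), 1/((r:ℝ) * Real.sqrt r)) := by
          rw [Finset.mul_sum]
          exact Finset.sum_congr rfl fun r _ => by rw [div_eq_mul_one_div]
      _ ≤ Real.sqrt q * (∑ r ∈ Finset.Ioc q L, 1/((r:ℝ) * Real.sqrt r)) := by
          gcongr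
      _ ≤ Real.sqrt q * (2/Real.sqrt q) := by
          gcongr
          exact sum_Ioc_telescope q L hq1
      _ = 2 := by
          rw [mul_div_cancel₀]
          exact (Real.sqrt_pos.mpr hq0).ne'
  calc ∑ r ∈ E, W q r ≤ Real.exp 1 * ((∑ r ∈ E.filter (fun r => r ≤ q), Real.sqrt r / (q * Real.sqrt q))
        + (∑ r ∈ E.filter (fun r => ¬ r ≤ q), Real.sqrt q / (r * Real.sqrt r))) := by
        rw [← step2]; exact step1
    _ ≤ Real.exp 1 * (1 + 2) := by
        gcongr
        try exact Real.exp_pos 1 |>.le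
    _ = 3 * Real.exp 1 := by ring

lemma schur (E : Finset ℕ) (hE : ∀ q ∈ E, 1 ≤ q) (u : ℕ → ℝ) (hu : ∀ q, 0 ≤ u q) :
    ∑ q ∈ E, ∑ r ∈ E, u q * u r * W q r ≤ (3 * Real.exp 1) * ∑ q ∈ E, u q ^ 2 := by
  have hswap : ∑ q ∈ E, ∑ r ∈ E, u r^2 * W q r = ∑ q ∈ E, ∑ r ∈ E, u q^2 * W q r := by
    rw [Finset.sum_comm]
    exact Finset.sum_congr rfl fun q _ => Finset.sum_congr rfl fun r _ => by rw [W_symm]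
  have key : (2:ℝ) * (∑ q ∈ E, ∑ r ∈ E, u q * u r * W q r)
      ≤ (∑ q ∈ E, ∑ r ∈ E, u q^2 * W q r) + (∑ q ∈ E, ∑ r ∈ E, u r^2 * W q r) := by
    rw [← Finset.sum_add_distrib, Finset.mul_sum]
    refine Finset.sum_le_sum fun q _ => ?_
    rw [← Finset.sum_add_distrib, Finset.mul_sum]
    refine Finset.sum_le_sum fun r _ => ?_
    have := W_nonneg q r
    nlinarith [sq_nonneg (u q - u r)]
  have h3 : ∑ q ∈ E, ∑ r ∈ E, u q * u r * W q r ≤ ∑ q ∈ E, ∑ r ∈ E, u q^2 * W q r := by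
    rw [hswap] at key
    linarith
  calc ∑ q ∈ E, ∑ r ∈ E, u q * u r * W q r
      ≤ ∑ q ∈ E, ∑ r ∈ E, u q^2 * W q r := h3
    _ = ∑ q ∈ E, u q^2 * ∑ r ∈ E, W q r :=
        Finset.sum_congr rfl fun q _ => (Finset.mul_sum _ _ _).symm
    _ ≤ ∑ q ∈ E, u q^2 * (3 * Real.exp 1) := by
        refine Finset.sum_le_sum fun q hq => ?_
        have := row_bound_s14 E hE q hq
        nlinarith [sq_nonneg (u q)]
    _ = (3 * Real.exp 1) * ∑ q ∈ E, u q ^ 2 := by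
        rw [← Finset.sum_mul]
        ring

lemma norm_cpow_neg_half (q : ℕ) (hq : 1 ≤ q) :
    ‖(q:ℂ) ^ (-(1/2:ℂ))‖ = 1 / Real.sqrt q := by
  have hq0 : (0:ℝ) < q := by exact_mod_cast hq
  rw [show ((q:ℂ)) = ((q:ℝ):ℂ) by norm_cast,
    Complex.norm_cpow_eq_rpow_re_of_pos hq0]
  rw [show (-(1/2:ℂ)).re = -(1/2:ℝ) by simp]
  rw [Real.rpow_neg hq0.le, Real.sqrt_eq_rpow]
  norm_num

lemma gauss_int (θ : ℝ) :
    ∫ x : ℝ, Complex.exp (I * θ * x) * Complex.exp (-(1:ℂ) * x ^ 2)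
      = ((Real.sqrt π * Real.exp (-θ^2/4) : ℝ) : ℂ) := by
  rw [fourierIntegral_gaussian (by simp) (θ:ℂ)]
  rw [show ((π:ℂ)/1) = ((π:ℝ):ℂ) by norm_num]
  rw [show (-(θ:ℂ)^2/(4*1)) = ((-θ^2/4 : ℝ) : ℂ) by push_cast; ring]
  rw [← Complex.ofReal_exp]
  rw [show ((π:ℝ):ℂ) ^ (1/2:ℂ) = ((Real.sqrt π : ℝ):ℂ) by
    rw [Real.sqrt_eq_rpow, Complex.ofReal_cpow Real.pi_pos.le]; norm_num]
  rw [← Complex.ofReal_mul]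

lemma gauss_integrable (z : ℂ) (θ : ℝ) :
    Integrable (fun x : ℝ => z * (Complex.exp (I * θ * x) * Complex.exp (-(1:ℂ) * x ^ 2))) := by
  apply Integrable.const_mul
  have heq : (fun x : ℝ => Complex.exp (I * θ * x) * Complex.exp (-(1:ℂ) * x ^ 2))
      = fun x : ℝ => Complex.exp (-(1:ℂ) * x^2 + (I*θ)*x + 0) := by
    funext x
    rw [← Complex.exp_add]
    congr 1
    ring
  rw [heq]
  exact integrable_cexp_quadratic (by simp) _ _

lemma integral_complex_re (f : ℝ → ℂ) (hf : Integrable f) :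
    ∫ x, (f x).re = (∫ x, f x).re := by
  have := integral_re hf
  simpa using this

lemma cont_cexp (θ : ℝ) : Continuous fun t : ℝ => Complex.exp ((↑(θ * t)) * I) :=
  Complex.continuous_exp.comp <|
    (Complex.continuous_ofReal.comp (continuous_const.mul continuous_id)).mul continuous_const

set_option maxHeartbeats 1000000 in
lemma embedL2 (E : Finset ℕ) (hE : ∀ q ∈ E, 1 ≤ q) (b : ℕ → ℂ) :
    (∫ t in (0:ℝ)..1, ‖∑ q ∈ E, b q * (q:ℂ) ^ (-((1/2:ℂ) + (t:ℂ) * I))‖ ^ 2)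
      ≤ (Real.exp 1 * (Real.sqrt π * (3 * Real.exp 1))) * ∑ q ∈ E, ‖b q‖ ^ 2 := by
  set lam : ℕ → ℝ := fun q => -Real.log q with hlam
  set c : ℕ → ℂ := fun q => b q * (q:ℂ) ^ (-(1/2:ℂ)) with hcdef
  have hpt : ∀ t : ℝ, (∑ q ∈ E, b q * (q:ℂ) ^ (-((1/2:ℂ) + (t:ℂ) * I)))
      = ∑ q ∈ E, c q * Complex.exp (↑(lam q * t) * I) := by
    intro t
    refine Finset.sum_congr rfl fun q hq => ?_
    rw [cpow_neg_half_add q (hE q hq) t, hcdef]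
    dsimp only
    rw [← mul_assoc]
  have hnorm_c : ∀ q ∈ E, ‖c q‖ = ‖b q‖ / Real.sqrt q := by
    intro q hq
    rw [hcdef]
    dsimp only
    rw [norm_mul, norm_cpow_neg_half q (hE q hq), mul_one_div]
  have hcont : Continuous fun t : ℝ => ∑ q ∈ E, c q * Complex.exp (↑(lam q * t) * I) :=
    continuous_finset_sum E fun q _ => continuous_const.mul (cont_cexp _)
  set h : ℝ → ℝ := fun t => ‖∑ q ∈ E, c q * Complex.exp (↑(lam q * t) * I)‖^2 with hh
  have hcont2 : Continuous h := (hcont.norm).pow 2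
  have hht : ∀ t, 0 ≤ h t := fun t => by rw [hh]; positivity
  set B : ℝ := ∑ q ∈ E, ‖c q‖ with hB
  have hhB : ∀ t, ‖∑ q ∈ E, c q * Complex.exp (↑(lam q * t) * I)‖ ≤ B := by
    intro t
    refine (norm_sum_le _ _).trans ?_
    refine Finset.sum_le_sum fun q hq => ?_
    rw [norm_mul, show ‖Complex.exp (↑(lam q * t) * I)‖ = 1 by
      rw [Complex.norm_exp_ofReal_mul_I], mul_one]
  have hcontg : Continuous fun t : ℝ => Real.exp (-t^2) :=
    Real.continuous_exp.comp (continuous_neg.comp (continuous_pow 2))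
  have hInt : Integrable (fun t : ℝ => Real.exp (-t^2) * h t) := by
    apply Integrable.mono' ((integrable_exp_neg_mul_sq one_pos).const_mul (B^2))
    · exact (hcontg.mul hcont2).aestronglyMeasurable
    · refine ae_of_all _ fun t => ?_
      rw [Real.norm_eq_abs, _root_.abs_of_nonneg (by positivity)]
      have h1 : h t ≤ B^2 := by
        rw [hh]
        dsimp only
        have h2 := hhB t
        nlinarith [norm_nonneg (∑ q ∈ E, c q * Complex.exp (↑(lam q * t) * I))]
      have h3 : (0:ℝ) < Real.exp (-t^2) := Real.exp_pos _
      calc Real.exp (-t^2) * h t ≤ Real.exp (-t^2) * B^2 := by nlinarith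
        _ = B^2 * Real.exp (-1*t^2) := by ring_nf
  have step_c : (∫ t in (0:ℝ)..1, h t) ≤ Real.exp 1 * ∫ t in (0:ℝ)..1, Real.exp (-t^2) * h t := by
    rw [← intervalIntegral.integral_const_mul]
    apply intervalIntegral.integral_mono_on zero_le_one
      (hcont2.intervalIntegrable _ _)
      ((continuous_const.mul (hcontg.mul hcont2)).intervalIntegrable _ _)
    intro t ht
    rcases ht with ⟨h0, h1'⟩
    have h1 : (1:ℝ) ≤ Real.exp 1 * Real.exp (-t^2) := by
      rw [← Real.exp_add]
      refine Real.one_le_exp ?_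
      nlinarith
    have := hht t
    show h t ≤ Real.exp 1 * (Real.exp (-t^2) * h t)
    nlinarith
  have step_d : (∫ t in (0:ℝ)..1, Real.exp (-t^2) * h t) ≤ ∫ t : ℝ, Real.exp (-t^2) * h t := by
    rw [intervalIntegral.integral_of_le zero_le_one]
    exact setIntegral_le_integral hInt (ae_of_all _ fun t => by positivity)
  set z : ℕ → ℕ → ℂ := fun q r => c q * (starRingEnd ℂ) (c r) with hz
  have hpt2 : ∀ x : ℝ, Real.exp (-x^2) * h x
      = ∑ q ∈ E, ∑ r ∈ E, (z q r * (Complex.exp (I * ↑(lam q - lam r) * ↑x)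
          * Complex.exp (-(1:ℂ) * ↑x ^ 2))).re := by
    intro x
    rw [hh]
    dsimp only
    rw [normsq_sum E c lam x, Finset.mul_sum]
    refine Finset.sum_congr rfl fun q _ => ?_
    rw [Finset.mul_sum]
    refine Finset.sum_congr rfl fun r _ => ?_
    have he : z q r * (Complex.exp (I * ↑(lam q - lam r) * ↑x) * Complex.exp (-(1:ℂ) * ↑x^2))
        = (c q * (starRingEnd ℂ) (c r) * Complex.exp (↑((lam q - lam r) * x) * I))
            * ((Real.exp (-x^2) : ℝ) : ℂ) := by
      rw [hz]
      dsimp only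
      rw [Complex.ofReal_exp]
      conv_rhs => rw [mul_assoc, ← Complex.exp_add]
      rw [← Complex.exp_add]
      congr 1
      push_cast
      ring
    rw [he]
    conv_rhs => rw [Complex.mul_re, Complex.ofReal_re, Complex.ofReal_im]
    ring
  have hIntF : ∀ q r : ℕ, Integrable (fun x : ℝ => (z q r * (Complex.exp (I * ↑(lam q - lam r) * ↑x)
      * Complex.exp (-(1:ℂ) * ↑x ^ 2))).re) := fun q r => (gauss_integrable _ _).re
  have step_e : (∫ x : ℝ, Real.exp (-x^2) * h x)
      = ∑ q ∈ E, ∑ r ∈ E, (z q r).re * (Real.sqrt π * Real.exp (-(lam q - lam r)^2/4)) := by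
    rw [show (fun x : ℝ => Real.exp (-x^2) * h x) = fun x : ℝ => ∑ q ∈ E, ∑ r ∈ E,
        (z q r * (Complex.exp (I * (↑(lam q - lam r) : ℂ) * (x:ℂ))
          * Complex.exp (-(1:ℂ) * (x:ℂ) ^ 2))).re from funext hpt2]
    rw [integral_finset_sum E (fun q _ => integrable_finset_sum E (fun r _ => hIntF q r))]
    refine Finset.sum_congr rfl fun q _ => ?_
    rw [integral_finset_sum E (fun r _ => hIntF q r)]
    refine Finset.sum_congr rfl fun r _ => ?_
    rw [integral_complex_re _ (gauss_integrable _ _)]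
    rw [MeasureTheory.integral_const_mul, gauss_int (lam q - lam r)]
    rw [Complex.mul_re]
    simp only [Complex.ofReal_re, Complex.ofReal_im, mul_zero, sub_zero]
  have step_f : ∑ q ∈ E, ∑ r ∈ E, (z q r).re * (Real.sqrt π * Real.exp (-(lam q - lam r)^2/4))
      ≤ Real.sqrt π * ((3 * Real.exp 1) * ∑ q ∈ E, ‖b q‖^2) := by
    have hterm : ∀ q ∈ E, ∀ r ∈ E,
        (z q r).re * (Real.sqrt π * Real.exp (-(lam q - lam r)^2/4))
          ≤ Real.sqrt π * (‖b q‖ * ‖b r‖ * W q r) := by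
      intro q hq r hr
      have h1 : (z q r).re ≤ ‖c q‖ * ‖c r‖ := by
        calc (z q r).re ≤ |(z q r).re| := le_abs_self _
          _ ≤ ‖z q r‖ := Complex.abs_re_le_norm _
          _ = ‖c q‖ * ‖c r‖ := by
              rw [hz]
              dsimp only
              rw [norm_mul]
              congr 1
              simp [Complex.norm_conj]
      have h2 : ‖c q‖ * ‖c r‖ * Real.exp (-(lam q - lam r)^2/4) = ‖b q‖ * ‖b r‖ * W q r := by
        rw [hnorm_c q hq, hnorm_c r hr]
        unfold W
        rw [show (lam q - lam r)^2 = (Real.log q - Real.log r)^2 by rw [hlam]; dsimp only; ring]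
        field_simp
        try ring
      calc (z q r).re * (Real.sqrt π * Real.exp (-(lam q - lam r)^2/4))
          ≤ (‖c q‖ * ‖c r‖) * (Real.sqrt π * Real.exp (-(lam q - lam r)^2/4)) := by
            apply mul_le_mul_of_nonneg_right h1 (by positivity)
        _ = Real.sqrt π * (‖c q‖ * ‖c r‖ * Real.exp (-(lam q - lam r)^2/4)) := by ring
        _ = Real.sqrt π * (‖b q‖ * ‖b r‖ * W q r) := by rw [h2]
    calc ∑ q ∈ E, ∑ r ∈ E, (z q r).re * (Real.sqrt π * Real.exp (-(lam q - lam r)^2/4))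
        ≤ ∑ q ∈ E, ∑ r ∈ E, Real.sqrt π * (‖b q‖ * ‖b r‖ * W q r) :=
          Finset.sum_le_sum fun q hq => Finset.sum_le_sum fun r hr => hterm q hq r hr
      _ = Real.sqrt π * ∑ q ∈ E, ∑ r ∈ E, ‖b q‖ * ‖b r‖ * W q r := by
          rw [Finset.mul_sum]
          exact Finset.sum_congr rfl fun q _ => (Finset.mul_sum _ _ _).symm
      _ ≤ Real.sqrt π * ((3 * Real.exp 1) * ∑ q ∈ E, ‖b q‖^2) := by
          apply mul_le_mul_of_nonneg_left
            (schur E hE (fun q => ‖b q‖) (fun q => norm_nonneg _)) (Real.sqrt_nonneg _)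
  calc (∫ t in (0:ℝ)..1, ‖∑ q ∈ E, b q * (q:ℂ) ^ (-((1/2:ℂ) + (t:ℂ) * I))‖ ^ 2)
      = ∫ t in (0:ℝ)..1, h t :=
        intervalIntegral.integral_congr fun t _ => by rw [hh]; dsimp only; rw [hpt t]
    _ ≤ Real.exp 1 * ∫ t in (0:ℝ)..1, Real.exp (-t^2) * h t := step_c
    _ ≤ Real.exp 1 * ∫ t : ℝ, Real.exp (-t^2) * h t := by
        apply mul_le_mul_of_nonneg_left step_d (Real.exp_pos 1).le
    _ = Real.exp 1 * ∑ q ∈ E, ∑ r ∈ E, (z q r).re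
          * (Real.sqrt π * Real.exp (-(lam q - lam r)^2/4)) := by rw [step_e]
    _ ≤ Real.exp 1 * (Real.sqrt π * ((3 * Real.exp 1) * ∑ q ∈ E, ‖b q‖^2)) := by
        apply mul_le_mul_of_nonneg_left step_f (Real.exp_pos 1).le
    _ = (Real.exp 1 * (Real.sqrt π * (3 * Real.exp 1))) * ∑ q ∈ E, ‖b q‖ ^ 2 := by ring

/-- The embedding for `p = 2k` an even integer: there is a constant `C_p` such that for
every finite Dirichlet polynomial `f`, `∫_0^1 |f(1/2+it)|^p dt ≤ C_p ‖f‖_{𝓗^p}^p`, where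
`‖f‖_{𝓗^p}^p = lim_{T→∞} (1/(2T)) ∫_{-T}^T |f(it)|^p dt` (the limit `M` below). -/
theorem embedding_even_integer (k : ℕ) (hk : 0 < k) :
    ∃ C : ℝ, ∀ (N : ℕ) (a : ℕ → ℂ) (M : ℝ),
      Tendsto (fun T : ℝ => (1 / (2 * T)) *
          ∫ t in (-T)..T,
            ‖∑ n ∈ Finset.Icc 1 N, a n * (n : ℂ) ^ (-((t : ℂ) * I))‖ ^ (2 * k))
        atTop (nhds M) →
      (∫ t in (0:ℝ)..1,
          ‖∑ n ∈ Finset.Icc 1 N, a n * (n : ℂ) ^ (-((1 / 2 : ℂ) + t * I))‖ ^ (2 * k)) ≤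
        C * M := by

  refine ⟨Real.exp 1 * (Real.sqrt π * (3 * Real.exp 1)), ?_⟩
  intro N a M hM
  set E := Finset.Icc 1 (N^k) with hEdef
  have hE : ∀ q ∈ E, 1 ≤ q := fun q hq => (Finset.mem_Icc.mp hq).1
  set b : ℕ → ℂ := fun q => ∑ v ∈ (Fintype.piFinset fun _ : Fin k => Finset.Icc 1 N).filter
      (fun v => ∏ i, v i = q), ∏ i, a (v i) with hb
  have hnorm : ∀ (s : ℂ), ‖∑ n ∈ Finset.Icc 1 N, a n * (n:ℂ)^s‖^(2*k)
      = ‖∑ q ∈ E, b q * (q:ℂ)^s‖^2 := by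
    intro s
    rw [mul_comm 2 k, pow_mul, ← norm_pow, dirichlet_pow k N a s]
  have hM' : Tendsto (fun T : ℝ => (1/(2*T)) *
      ∫ t in (-T)..T, ‖∑ q ∈ E, b q * (q:ℂ)^(-((t:ℂ)*I))‖^2) atTop (nhds M) := by
    refine Filter.Tendsto.congr (fun T => ?_) hM
    congr 1
    exact intervalIntegral.integral_congr fun t _ => hnorm (-((t:ℂ)*I))
  have hMeq : M = ∑ q ∈ E, ‖b q‖^2 := tendsto_nhds_unique hM' (meanValue E hE b)
  calc (∫ t in (0:ℝ)..1,
        ‖∑ n ∈ Finset.Icc 1 N, a n * (n : ℂ) ^ (-((1 / 2 : ℂ) + t * I))‖ ^ (2 * k))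
      = ∫ t in (0:ℝ)..1, ‖∑ q ∈ E, b q * (q:ℂ)^(-((1/2:ℂ) + (t:ℂ)*I))‖^2 :=
        intervalIntegral.integral_congr fun t _ => hnorm _
    _ ≤ (Real.exp 1 * (Real.sqrt π * (3 * Real.exp 1))) * ∑ q ∈ E, ‖b q‖^2 := embedL2 E hE b
    _ = (Real.exp 1 * (Real.sqrt π * (3 * Real.exp 1))) * M := by rw [hMeq]
end
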